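/- arXiv:2208.05261 — 2 statements merged into one kernel-verified Lean document; each statement's English description precedes it below -/
import Mathlib

section
/- The quantity C_{P,2̄,n} satisfies: C_{P,2̄,1} = 1, C_{P,2̄,2} = 2, C_{P,2̄,3} = 3, and for every n > 3, C_{P,2̄,n} = C_{P,2̄,n−1} + C_{P,2,n−2} + C_{P,n−3}. -/
/-- A Roman dominating function: every vertex with value 0 has a neighbor with value 2. -/
def IsRDF {V : Type*} (G : SimpleGraph V) (f : V → Fin 3) : Prop :=
  ∀ v, f v = 0 → ∃ u, G.Adj v u ∧ f u = 2

/-- A minimal Roman dominating function: an rdf such that no rdf `g ≠ f` satisfies `g ≤ f`. -/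
def IsMinimalRDF {V : Type*} (G : SimpleGraph V) (f : V → Fin 3) : Prop :=
  IsRDF G f ∧ ∀ g : V → Fin 3, IsRDF G g → g ≤ f → g = f

/-- The number of minimal Roman dominating functions of `G`. -/
noncomputable def numMinRDF {V : Type*} (G : SimpleGraph V) : ℕ :=
  {f : V → Fin 3 | IsMinimalRDF G f}.ncard

/-- `C_{P,n}`: the number of minimal Roman dominating functions of the path `Pₙ`. -/
noncomputable def CP (n : ℕ) : ℕ := numMinRDF (SimpleGraph.pathGraph n)

/-- `C_{P,2,n}`: the number of minimal rdf `f` of `Pₙ` with `f(v₁) = 2`. -/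
noncomputable def CP2 (n : ℕ) : ℕ :=
  {f : Fin n → Fin 3 | IsMinimalRDF (SimpleGraph.pathGraph n) f ∧
    ∃ h : 0 < n, f ⟨0, h⟩ = 2}.ncard

/-- `C_{P,2̄,n}`: the number of minimal rdf `f` of `Pₙ` with `f(v₁) ≠ 2`. -/
noncomputable def CPbar2 (n : ℕ) : ℕ :=
  {f : Fin n → Fin 3 | IsMinimalRDF (SimpleGraph.pathGraph n) f ∧
    ∀ h : 0 < n, f ⟨0, h⟩ ≠ 2}.ncard


set_option linter.unusedTactic false

def extf {n : ℕ} (f : Fin n → Fin 3) (i : ℕ) : ℕ :=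
  if h : i < n then (f ⟨i, h⟩).val else 3

def pcond (F : ℕ → ℕ) (i : ℕ) : Prop :=
  (F i = 0 → (1 ≤ i ∧ F (i-1) = 2) ∨ F (i+1) = 2) ∧
  (F i = 1 → ¬(1 ≤ i ∧ F (i-1) = 2) ∧ F (i+1) ≠ 2) ∧
  (F i = 2 → ((1 ≤ i ∧ F (i-1) = 0) ∧ (i ≤ 1 ∨ F (i-2) ≠ 2)) ∨
    (F (i+1) = 0 ∧ F (i+2) ≠ 2))

def Good {n : ℕ} (f : Fin n → Fin 3) : Prop := ∀ i, pcond (extf f) i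

instance pathAdjDec (n : ℕ) : DecidableRel (SimpleGraph.pathGraph n).Adj := fun _ _ =>
  decidable_of_iff _ SimpleGraph.pathGraph_adj.symm

instance (n : ℕ) (f : Fin n → Fin 3) : Decidable (IsRDF (SimpleGraph.pathGraph n) f) := by
  unfold IsRDF; infer_instance

instance (n : ℕ) (f g : Fin n → Fin 3) : Decidable (g ≤ f) :=
  decidable_of_iff (∀ i, g i ≤ f i) Iff.rfl

instance (n : ℕ) (f : Fin n → Fin 3) : Decidable (IsMinimalRDF (SimpleGraph.pathGraph n) f) := by
  unfold IsMinimalRDF; infer_instance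
lemma rdf_minimal_iff {V : Type*} (G : SimpleGraph V) (f : V → Fin 3) :
    IsMinimalRDF G f ↔ IsRDF G f ∧
      (∀ v, f v = 1 → ∀ u, G.Adj v u → f u ≠ 2) ∧
      (∀ v, f v = 2 → ∃ u, G.Adj v u ∧ f u = 0 ∧ ∀ w, G.Adj u w → w ≠ v → f w ≠ 2) := by
  classical
  constructor
  · rintro ⟨hf, hmin⟩
    refine ⟨hf, ?_, ?_⟩
    · intro v hv u hadj hu
      set g := Function.update f v 0 with hg
      have hgrdf : IsRDF G g := by
        intro w hw
        by_cases hwv : w = v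
        · subst hwv
          refine ⟨u, hadj, ?_⟩
          have : u ≠ w := fun h => by rw [h, hv] at hu; exact absurd hu (by decide)
          simp [hg, Function.update_of_ne this, hu]
        · have hfw : f w = 0 := by
            have := hw; rwa [hg, Function.update_of_ne hwv] at this
          obtain ⟨u', hu'adj, hu'⟩ := hf w hfw
          have : u' ≠ v := fun h => by rw [h, hv] at hu'; exact absurd hu' (by decide)
          exact ⟨u', hu'adj, by simp [hg, Function.update_of_ne this, hu']⟩
      have hle : g ≤ f := by
        intro w
        by_cases hwv : w = v
        · subst hwv; simp [hg, hv]
        · simp [hg, Function.update_of_ne hwv]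
      have := hmin g hgrdf hle
      have : g v = f v := congrFun this v
      rw [hg, Function.update_self, hv] at this
      exact absurd this (by decide)
    · intro v hv
      by_contra hc
      push_neg at hc
      set g := Function.update f v 1 with hg
      have hgrdf : IsRDF G g := by
        intro w hw
        have hwv : w ≠ v := fun h => by
          rw [h, hg, Function.update_self] at hw; exact absurd hw (by decide)
        have hfw : f w = 0 := by have := hw; rwa [hg, Function.update_of_ne hwv] at this
        obtain ⟨u', hadj, hu'⟩ := hf w hfw
        by_cases huv : u' = v
        · subst huv
          obtain ⟨w', hw'adj, hw'v, hw'⟩ := hc w hadj.symm hfw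
          exact ⟨w', hw'adj, by simp [hg, Function.update_of_ne hw'v, hw']⟩
        · exact ⟨u', hadj, by simp [hg, Function.update_of_ne huv, hu']⟩
      have hle : g ≤ f := by
        intro w
        by_cases hwv : w = v
        · subst hwv; simp [hg, hv]
        · simp [hg, Function.update_of_ne hwv]
      have := congrFun (hmin g hgrdf hle) v
      rw [hg, Function.update_self, hv] at this
      exact absurd this (by decide)
  · rintro ⟨hf, h1, h2⟩
    refine ⟨hf, ?_⟩
    intro g hg hle
    funext v
    by_contra hne
    have hlt : (g v).val < (f v).val := lt_of_le_of_ne (Fin.le_def.mp (hle v)) (fun h => hne (Fin.ext h))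
    have hfv3 : (f v).val < 3 := (f v).isLt
    interval_cases h : (f v).val
    · omega
    · have hfv : f v = 1 := Fin.ext h
      have hgv : g v = 0 := Fin.ext (by omega)
      obtain ⟨u, hadj, hu⟩ := hg v hgv
      have : (f u).val = 2 := by
        have := Fin.le_def.mp (hle u); rw [hu] at this
        have := (f u).isLt; omega
      exact h1 v hfv u hadj (Fin.ext this)
    · have hfv : f v = 2 := Fin.ext h
      obtain ⟨u, hadj, hu0, hpriv⟩ := h2 v hfv
      have hgu : g u = 0 := by
        have := Fin.le_def.mp (hle u); rw [hu0] at this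
        exact Fin.ext (by simpa using this)
      obtain ⟨w, hwadj, hw⟩ := hg u hgu
      have hfw : f w = 2 := by
        have := Fin.le_def.mp (hle w); rw [hw] at this
        have := (f w).isLt; exact Fin.ext (by omega)
      have hwv : w = v := by
        by_contra hwv
        exact hpriv w hwadj hwv hfw
      rw [hwv] at hw
      rw [hw] at hlt
      omega

lemma extf_val {n : ℕ} (f : Fin n → Fin 3) (v : Fin n) : extf f v.val = (f v).val := by
  simp [extf, v.isLt]

lemma extf_of_le {n : ℕ} (f : Fin n → Fin 3) {i : ℕ} (h : n ≤ i) : extf f i = 3 := by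
  simp [extf, Nat.not_lt.mpr h]

lemma extf_eq_val {n : ℕ} {f : Fin n → Fin 3} {c : Fin 3} {i : ℕ}
    (h : extf f i = c.val) : ∃ hi : i < n, f ⟨i, hi⟩ = c := by
  by_cases hi : i < n
  · refine ⟨hi, ?_⟩
    rw [extf, dif_pos hi] at h
    exact Fin.ext h
  · rw [extf, dif_neg hi] at h
    exact absurd h.symm (Nat.ne_of_lt c.isLt)

lemma exists_adj_iff {n : ℕ} (f : Fin n → Fin 3) (v : Fin n) (c : Fin 3) :
    (∃ u, (SimpleGraph.pathGraph n).Adj v u ∧ f u = c) ↔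
      ((1 ≤ v.val ∧ extf f (v.val - 1) = c.val) ∨ extf f (v.val + 1) = c.val) := by
  constructor
  · rintro ⟨u, hadj, hu⟩
    rw [SimpleGraph.pathGraph_adj] at hadj
    rcases hadj with h | h
    · right
      have : extf f u.val = c.val := by rw [extf_val, hu]
      rwa [← h] at this
    · left
      refine ⟨by omega, ?_⟩
      have : extf f u.val = c.val := by rw [extf_val, hu]
      rwa [show v.val - 1 = u.val by omega]
  · rintro (⟨h1, h2⟩ | h2)
    · obtain ⟨hi, hf⟩ := extf_eq_val h2
      exact ⟨⟨v.val - 1, hi⟩, SimpleGraph.pathGraph_adj.mpr (Or.inr (by simp; omega)), hf⟩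
    · obtain ⟨hi, hf⟩ := extf_eq_val h2
      exact ⟨⟨v.val + 1, hi⟩, SimpleGraph.pathGraph_adj.mpr (Or.inl (by simp)), hf⟩

lemma charG (f : Fin n → Fin 3) :
    IsMinimalRDF (SimpleGraph.pathGraph n) f ↔ Good f := by
  rw [rdf_minimal_iff]
  constructor
  · rintro ⟨h0, h1, h2⟩ i
    by_cases hi : i < n
    swap
    · have h3 : extf f i = 3 := extf_of_le f (Nat.le_of_not_lt hi)
      refine ⟨?_, ?_, ?_⟩ <;> intro hc <;> rw [h3] at hc <;> omega
    set v : Fin n := ⟨i, hi⟩ with hv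
    have hvi : v.val = i := rfl
    refine ⟨?_, ?_, ?_⟩
    · intro hFi
      obtain ⟨_, hf⟩ := extf_eq_val (c := 0) hFi
      have := h0 v hf
      have := (exists_adj_iff f v 2).mp this
      simpa [hvi] using this
    · intro hFi
      obtain ⟨_, hf⟩ := extf_eq_val (c := 1) hFi
      have hne : ¬ ∃ u, (SimpleGraph.pathGraph n).Adj v u ∧ f u = 2 := by
        rintro ⟨u, hadj, hu⟩
        exact h1 v hf u hadj hu
      rw [exists_adj_iff f v 2] at hne
      push_neg at hne
      simp only [show ((2:Fin 3):ℕ) = 2 from rfl] at hne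
      exact ⟨fun hc => hne.1 hc.1 hc.2, hne.2⟩
    · intro hFi
      obtain ⟨_, hf⟩ := extf_eq_val (c := 2) hFi
      obtain ⟨u, hadj, hu0, hpriv⟩ := h2 v hf
      rw [SimpleGraph.pathGraph_adj] at hadj
      rcases hadj with h | h
      · -- u.val = i + 1
        right
        constructor
        · have := extf_val f u
          rw [← h, hvi] at this
          rw [this, hu0]; rfl
        · intro hc
          obtain ⟨hw, hfw⟩ := extf_eq_val (c := 2) hc
          have hadjuw : (SimpleGraph.pathGraph n).Adj u ⟨i+2, hw⟩ := by
            rw [SimpleGraph.pathGraph_adj]; left; simp; omega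
          have hne : (⟨i+2, hw⟩ : Fin n) ≠ v := by
            intro hcon
            have := congrArg Fin.val hcon
            simp [hvi] at this
          exact hpriv _ hadjuw hne hfw
      · -- u.val + 1 = i
        left
        refine ⟨⟨by omega, ?_⟩, ?_⟩
        · have := extf_val f u
          rw [show u.val = i - 1 by omega] at this
          rw [this, hu0]; rfl
        · by_cases hi2 : i ≤ 1
          · exact Or.inl hi2
          · right
            intro hc
            obtain ⟨hw, hfw⟩ := extf_eq_val (c := 2) hc
            have hadjuw : (SimpleGraph.pathGraph n).Adj u ⟨i-2, hw⟩ := by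
              rw [SimpleGraph.pathGraph_adj]; right; simp; omega
            have hne : (⟨i-2, hw⟩ : Fin n) ≠ v := by
              intro hcon
              have := congrArg Fin.val hcon
              simp [hvi] at this
              omega
            exact hpriv _ hadjuw hne hfw
  · intro h
    refine ⟨?_, ?_, ?_⟩
    · intro v hv
      have hF : extf f v.val = 0 := by rw [extf_val, hv]; rfl
      have := (h v.val).1 hF
      exact (exists_adj_iff f v 2).mpr this
    · intro v hv u hadj hu
      have hF : extf f v.val = 1 := by rw [extf_val, hv]; rfl
      have hnc := (h v.val).2.1 hF
      have := (exists_adj_iff f v 2).mp ⟨u, hadj, hu⟩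
      rcases this with h' | h'
      · exact hnc.1 h'
      · exact hnc.2 h'
    · intro v hv
      have hF : extf f v.val = 2 := by rw [extf_val, hv]; rfl
      rcases (h v.val).2.2 hF with ⟨⟨h1i, hFm⟩, hpr⟩ | ⟨hF0, hF2⟩
      · obtain ⟨hm, hfm⟩ := extf_eq_val (c := 0) hFm
        refine ⟨⟨v.val - 1, hm⟩, ?_, hfm, ?_⟩
        · rw [SimpleGraph.pathGraph_adj]; right; simp; omega
        · intro w hadj hne hw2
          rw [SimpleGraph.pathGraph_adj] at hadj
          simp only at hadj
          rcases hadj with h' | h'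
          · -- w.val = v.val - 1 + 1 = v.val
            exact hne (Fin.ext (by omega))
          · -- w.val + 1 = v.val - 1
            rcases hpr with h'' | h''
            · omega
            · have : extf f (v.val - 2) = 2 := by
                rw [show v.val - 2 = w.val by omega, extf_val, hw2]; rfl
              exact h'' this
      · obtain ⟨hm, hfm⟩ := extf_eq_val (c := 0) hF0
        refine ⟨⟨v.val + 1, hm⟩, ?_, hfm, ?_⟩
        · rw [SimpleGraph.pathGraph_adj]; left; simp
        · intro w hadj hne hw2
          rw [SimpleGraph.pathGraph_adj] at hadj
          simp only at hadj
          rcases hadj with h' | h'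
          · -- w.val = v.val + 2
            have : extf f (v.val + 2) = 2 := by
              rw [show v.val + 2 = w.val by omega, extf_val, hw2]; rfl
            exact hF2 this
          · -- w.val + 1 = v.val + 1 → w = v
            exact hne (Fin.ext (by omega))
lemma extf_cons_zero {m : ℕ} (a : Fin 3) (g : Fin m → Fin 3) :
    extf (Fin.cons a g) 0 = a.val := by
  simp [extf]

lemma extf_cons_succ {m : ℕ} (a : Fin 3) (g : Fin m → Fin 3) (i : ℕ) :
    extf (Fin.cons a g) (i + 1) = extf g i := by
  unfold extf
  by_cases h : i < m
  · rw [dif_pos (by omega : i + 1 < m + 1), dif_pos h]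
    have e : (⟨i + 1, by omega⟩ : Fin (m+1)) = Fin.succ ⟨i, h⟩ := rfl
    rw [e, Fin.cons_succ]
  · rw [dif_neg (by omega), dif_neg h]

lemma pcond_shift {F G : ℕ → ℕ} {p : ℕ} (h : ∀ i, F (i + p) = G i) {i : ℕ}
    (hi : 2 ≤ i) : pcond F (i + p) ↔ pcond G i := by
  have h0 : F (i + p) = G i := h i
  have h1 : F (i + p - 1) = G (i - 1) := by
    have := h (i - 1); rwa [show i - 1 + p = i + p - 1 by omega] at this
  have h2 : F (i + p - 2) = G (i - 2) := by
    have := h (i - 2); rwa [show i - 2 + p = i + p - 2 by omega] at this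
  have h3 : F (i + p + 1) = G (i + 1) := by
    have := h (i + 1); rwa [show i + 1 + p = i + p + 1 by omega] at this
  have h4 : F (i + p + 2) = G (i + 2) := by
    have := h (i + 2); rwa [show i + 2 + p = i + p + 2 by omega] at this
  simp only [pcond]
  omega

lemma good_shift_one {F G : ℕ → ℕ} (h0 : F 0 = 1) (hs : ∀ i, F (i + 1) = G i) :
    (∀ i, pcond F i) ↔ ((∀ i, pcond G i) ∧ G 0 ≠ 2) := by
  have e1 : F 1 = G 0 := hs 0
  have e2 : F 2 = G 1 := hs 1
  have e3 : F 3 = G 2 := hs 2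
  have e4 : F 4 = G 3 := hs 3
  constructor
  · intro h
    have hG0 : G 0 ≠ 2 := by
      have := h 0
      simp only [pcond] at this
      norm_num at this
      omega
    refine ⟨?_, hG0⟩
    intro i
    match i with
    | 0 =>
      have := h 1
      simp only [pcond] at this ⊢
      norm_num at this ⊢
      omega
    | 1 =>
      have := h 2
      simp only [pcond] at this ⊢
      norm_num at this ⊢
      omega
    | (i + 2) =>
      exact (pcond_shift hs (by omega)).mp (h (i + 2 + 1))
  · rintro ⟨h, hG0⟩ j
    match j with
    | 0 =>
      simp only [pcond]
      norm_num
      omega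
    | 1 =>
      have := h 0
      simp only [pcond] at this ⊢
      norm_num at this ⊢
      omega
    | 2 =>
      have := h 1
      simp only [pcond] at this ⊢
      norm_num at this ⊢
      omega
    | (j + 3) =>
      exact (pcond_shift hs (by omega)).mpr (h (j + 2))

lemma good_shift_02 {F H : ℕ → ℕ} (h0 : F 0 = 0) (h1 : F 1 = 2)
    (hs : ∀ i, F (i + 2) = H i) (hH0 : H 0 = 2) :
    (∀ i, pcond F i) ↔ (∀ i, pcond H i) := by
  have e2 : F 2 = H 0 := hs 0
  have e3 : F 3 = H 1 := hs 1
  have e4 : F 4 = H 2 := hs 2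
  have e5 : F 5 = H 3 := hs 3
  constructor
  · intro h i
    match i with
    | 0 =>
      have := h 2
      simp only [pcond] at this ⊢
      norm_num at this ⊢
      omega
    | 1 =>
      have := h 3
      simp only [pcond] at this ⊢
      norm_num at this ⊢
      omega
    | (i + 2) =>
      exact (pcond_shift hs (by omega)).mp (h (i + 2 + 2))
  · intro h j
    match j with
    | 0 =>
      simp only [pcond]
      norm_num
      omega
    | 1 =>
      simp only [pcond]
      norm_num
      omega
    | 2 =>
      have := h 0
      simp only [pcond] at this ⊢
      norm_num at this ⊢
      omega
    | 3 =>
      have := h 1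
      simp only [pcond] at this ⊢
      norm_num at this ⊢
      omega
    | (j + 4) =>
      exact (pcond_shift hs (by omega)).mpr (h (j + 2))

lemma good_shift_020 {F W : ℕ → ℕ} (h0 : F 0 = 0) (h1 : F 1 = 2) (h2 : F 2 = 0)
    (hs : ∀ i, F (i + 3) = W i) :
    (∀ i, pcond F i) ↔ (∀ i, pcond W i) := by
  have e3 : F 3 = W 0 := hs 0
  have e4 : F 4 = W 1 := hs 1
  have e5 : F 5 = W 2 := hs 2
  have e6 : F 6 = W 3 := hs 3
  constructor
  · intro h i
    match i with
    | 0 =>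
      have := h 3
      simp only [pcond] at this ⊢
      norm_num at this ⊢
      omega
    | 1 =>
      have := h 4
      simp only [pcond] at this ⊢
      norm_num at this ⊢
      omega
    | (i + 2) =>
      exact (pcond_shift hs (by omega)).mp (h (i + 2 + 3))
  · intro h j
    match j with
    | 0 =>
      simp only [pcond]
      norm_num
      omega
    | 1 =>
      simp only [pcond]
      norm_num
      omega
    | 2 =>
      simp only [pcond]
      norm_num
      omega
    | 3 =>
      have := h 0
      simp only [pcond] at this ⊢
      norm_num at this ⊢
      omega
    | 4 =>
      have := h 1
      simp only [pcond] at this ⊢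
      norm_num at this ⊢
      omega
    | (j + 5) =>
      exact (pcond_shift hs (by omega)).mpr (h (j + 2))

lemma extf_lt {n : ℕ} (f : Fin n → Fin 3) {i : ℕ} (h : i < n) : extf f i < 3 := by
  rw [extf, dif_pos h]; exact (f _).isLt

lemma extf_tail {n : ℕ} (f : Fin (n+1) → Fin 3) (i : ℕ) :
    extf (Fin.tail f) i = extf f (i + 1) := by
  unfold extf
  by_cases h : i < n
  · rw [dif_pos h, dif_pos (by omega : i + 1 < n + 1)]
    rfl
  · rw [dif_neg h, dif_neg (by omega)]

lemma eq_cons {n : ℕ} (f : Fin (n+1) → Fin 3) {a : Fin 3} (h : extf f 0 = a.val) :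
    f = Fin.cons a (Fin.tail f) := by
  have h0 : f 0 = a := by
    apply Fin.ext
    rw [← h]
    have := extf_val f 0
    simpa using this.symm
  conv_lhs => rw [← Fin.cons_self_tail f]
  rw [h0]

lemma ne2_iff {n : ℕ} (f : Fin n → Fin 3) :
    (∀ h : 0 < n, f ⟨0, h⟩ ≠ 2) ↔ extf f 0 ≠ 2 := by
  by_cases h : 0 < n
  · constructor
    · intro hf hc
      have : extf f (⟨0,h⟩ : Fin n).val = (f ⟨0,h⟩).val := extf_val f ⟨0,h⟩
      simp only [Fin.val_mk] at this
      rw [this] at hc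
      exact hf h (Fin.ext hc)
    · intro hc h' hf
      have : extf f (⟨0,h'⟩ : Fin n).val = (f ⟨0,h'⟩).val := extf_val f ⟨0,h'⟩
      simp only [Fin.val_mk] at this
      rw [hf] at this
      exact hc (by rw [this]; rfl)
  · constructor
    · intro _ hc
      rw [extf, dif_neg (by omega)] at hc
      omega
    · intro _ h'
      omega

lemma eq2_iff {n : ℕ} (f : Fin n → Fin 3) (hn : 0 < n) :
    (∃ h : 0 < n, f ⟨0, h⟩ = 2) ↔ extf f 0 = 2 := by
  have he : extf f 0 = (f ⟨0,hn⟩).val := by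
    have := extf_val f ⟨0,hn⟩
    simpa using this
  constructor
  · rintro ⟨h, hf⟩
    rw [he]
    rw [show f ⟨0,hn⟩ = f ⟨0,h⟩ from rfl, hf]
    decide
  · intro h
    exact ⟨hn, Fin.ext (by rw [← he, h]; decide)⟩

def SBset (n : ℕ) : Set (Fin n → Fin 3) := {f | Good f ∧ ∀ h : 0 < n, f ⟨0, h⟩ ≠ 2}
def S2set (n : ℕ) : Set (Fin n → Fin 3) := {f | Good f ∧ ∃ h : 0 < n, f ⟨0, h⟩ = 2}
def SAset (n : ℕ) : Set (Fin n → Fin 3) := {f | Good f}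

lemma SB_decomp (k : ℕ) :
    SBset (k+4) = (fun g : Fin (k+3) → Fin 3 => (Fin.cons 1 g : Fin (k+4) → Fin 3)) '' SBset (k+3)
      ∪ (fun h : Fin (k+2) → Fin 3 => (Fin.cons 0 (Fin.cons 2 h) : Fin (k+4) → Fin 3)) '' S2set (k+2)
      ∪ (fun w : Fin (k+1) → Fin 3 => (Fin.cons 0 (Fin.cons 2 (Fin.cons 0 w)) : Fin (k+4) → Fin 3)) '' SAset (k+1) := by
  ext f
  constructor
  · rintro ⟨hg, hne⟩
    rw [ne2_iff] at hne
    have hF0lt : extf f 0 < 3 := extf_lt f (by omega)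
    have hF0 : extf f 0 = 0 ∨ extf f 0 = 1 := by omega
    rcases hF0 with hF0 | hF0
    · -- starts with 0, forced 2 next
      have hF1 : extf f 1 = 2 := by
        have := hg 0
        simp only [pcond] at this
        norm_num at this
        omega
      have hF2lt : extf f 2 < 3 := extf_lt f (by omega)
      have hF2ne1 : extf f 2 ≠ 1 := by
        have := hg 2
        simp only [pcond] at this
        norm_num at this
        omega
      set t1 : Fin (k+3) → Fin 3 := Fin.tail f with ht1
      set t2 : Fin (k+2) → Fin 3 := Fin.tail t1 with ht2
      have hs1 : ∀ i, extf f (i + 1) = extf t1 i := fun i => (extf_tail f i).symm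
      have hs2 : ∀ i, extf f (i + 2) = extf t2 i := fun i => by
        rw [show i + 2 = (i + 1) + 1 from rfl, hs1 (i+1), ← extf_tail t1 i]
      have hdec2 : f = Fin.cons 0 (Fin.cons 2 t2) := by
        rw [eq_cons f (a := 0) (by rw [hF0]; rfl)]
        congr 1
        rw [← ht1, eq_cons t1 (a := 2) (by rw [← hs1 0, hF1]; rfl), ← ht2]
      rcases (by omega : extf f 2 = 2 ∨ extf f 2 = 0) with hF2 | hF2
      · -- second block: 0 2 then h with h starting 2
        left; right
        refine ⟨t2, ⟨?_, ?_⟩, hdec2.symm⟩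
        · exact (good_shift_02 hF0 hF1 hs2 (by rw [← hs2 0]; exact hF2)).mp hg
        · rw [eq2_iff t2 (by omega), ← hs2 0]; exact hF2
      · -- third block: 0 2 0 then anything
        right
        set t3 : Fin (k+1) → Fin 3 := Fin.tail t2 with ht3
        have hs3 : ∀ i, extf f (i + 3) = extf t3 i := fun i => by
          rw [show i + 3 = (i + 2) + 1 from rfl, show (i+2)+1 = (i+1)+2 from by ring,
            hs2 (i+1), ← extf_tail t2 i]
        have hdec3 : f = Fin.cons 0 (Fin.cons 2 (Fin.cons 0 t3)) := by
          rw [hdec2]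
          congr 2
          rw [eq_cons t2 (a := 0) (by rw [show extf t2 0 = extf f 2 from (hs2 0).symm, hF2]; rfl), ← ht3]
        refine ⟨t3, ?_, hdec3.symm⟩
        exact (good_shift_020 hF0 hF1 hF2 hs3).mp hg
    · -- starts with 1
      left; left
      set t1 : Fin (k+3) → Fin 3 := Fin.tail f with ht1
      have hs1 : ∀ i, extf f (i + 1) = extf t1 i := fun i => (extf_tail f i).symm
      have := (good_shift_one hF0 hs1).mp hg
      refine ⟨t1, ⟨this.1, ?_⟩, (eq_cons f (a := 1) (by rw [hF0]; rfl)).symm⟩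
      rw [ne2_iff]
      exact this.2
  · rintro ((⟨g, ⟨hgood, hne⟩, rfl⟩ | ⟨h, ⟨hgood, he2⟩, rfl⟩) | ⟨w, hgood, rfl⟩)
    · constructor
      · refine (good_shift_one (by rw [extf_cons_zero]; rfl) (extf_cons_succ 1 g)).mpr
          ⟨hgood, ?_⟩
        rw [← ne2_iff]; exact hne
      · rw [ne2_iff, extf_cons_zero]
        decide
    · rw [eq2_iff h (by omega)] at he2
      constructor
      · refine (good_shift_02 (by rw [extf_cons_zero]; rfl) ?_ ?_ he2).mpr hgood
        · show extf (Fin.cons (0:Fin 3) (Fin.cons 2 h)) (0+1) = 2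
          rw [extf_cons_succ, extf_cons_zero]; rfl
        · intro i
          show extf (Fin.cons (0:Fin 3) (Fin.cons 2 h)) ((i+1)+1) = extf h i
          rw [extf_cons_succ, extf_cons_succ]
      · rw [ne2_iff, extf_cons_zero]
        decide
    · constructor
      · refine (good_shift_020 (by rw [extf_cons_zero]; rfl) ?_ ?_ ?_).mpr hgood
        · show extf (Fin.cons (0:Fin 3) (Fin.cons 2 (Fin.cons 0 w))) (0+1) = 2
          rw [extf_cons_succ, extf_cons_zero]; rfl
        · show extf (Fin.cons (0:Fin 3) (Fin.cons 2 (Fin.cons 0 w))) ((0+1)+1) = 0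
          rw [extf_cons_succ, extf_cons_succ, extf_cons_zero]; rfl
        · intro i
          show extf (Fin.cons (0:Fin 3) (Fin.cons 2 (Fin.cons 0 w))) ((i+1+1)+1) = extf w i
          rw [extf_cons_succ, extf_cons_succ, extf_cons_succ]
      · rw [ne2_iff, extf_cons_zero]
        decide

lemma ncard_SB (k : ℕ) :
    (SBset (k+4)).ncard = (SBset (k+3)).ncard + (S2set (k+2)).ncard + (SAset (k+1)).ncard := by
  have inj1 : Function.Injective (fun g : Fin (k+3) → Fin 3 => (Fin.cons 1 g : Fin (k+4) → Fin 3)) :=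
    fun a b hab => Fin.cons_right_injective _ hab
  have inj2 : Function.Injective (fun h : Fin (k+2) → Fin 3 => (Fin.cons 0 (Fin.cons 2 h) : Fin (k+4) → Fin 3)) :=
    fun a b hab => Fin.cons_right_injective _ (Fin.cons_right_injective _ hab)
  have inj3 : Function.Injective (fun w : Fin (k+1) → Fin 3 => (Fin.cons 0 (Fin.cons 2 (Fin.cons 0 w)) : Fin (k+4) → Fin 3)) :=
    fun a b hab => Fin.cons_right_injective _ (Fin.cons_right_injective _ (Fin.cons_right_injective _ hab))
  -- extf at 0 and 2 of the three shapes
  have v1 : ∀ g : Fin (k+3) → Fin 3, extf (Fin.cons (1:Fin 3) g : Fin (k+4) → Fin 3) 0 = 1 :=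
    fun g => by rw [extf_cons_zero]; rfl
  have v2 : ∀ h : Fin (k+2) → Fin 3, extf (Fin.cons (0:Fin 3) (Fin.cons 2 h) : Fin (k+4) → Fin 3) 0 = 0 :=
    fun h => by rw [extf_cons_zero]; rfl
  have v2' : ∀ h : Fin (k+2) → Fin 3, extf (Fin.cons (0:Fin 3) (Fin.cons 2 h) : Fin (k+4) → Fin 3) 2 = extf h 0 :=
    fun h => by
      show extf (Fin.cons (0:Fin 3) (Fin.cons 2 h)) ((0+1)+1) = extf h 0
      rw [extf_cons_succ, extf_cons_succ]
  have v3 : ∀ w : Fin (k+1) → Fin 3, extf (Fin.cons (0:Fin 3) (Fin.cons 2 (Fin.cons 0 w)) : Fin (k+4) → Fin 3) 0 = 0 :=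
    fun w => by rw [extf_cons_zero]; rfl
  have v3' : ∀ w : Fin (k+1) → Fin 3, extf (Fin.cons (0:Fin 3) (Fin.cons 2 (Fin.cons 0 w)) : Fin (k+4) → Fin 3) 2 = 0 :=
    fun w => by
      show extf (Fin.cons (0:Fin 3) (Fin.cons 2 (Fin.cons 0 w))) ((0+1)+1) = 0
      rw [extf_cons_succ, extf_cons_succ, extf_cons_zero]; rfl
  have d12 : Disjoint
      ((fun g : Fin (k+3) → Fin 3 => (Fin.cons 1 g : Fin (k+4) → Fin 3)) '' SBset (k+3))
      ((fun h : Fin (k+2) → Fin 3 => (Fin.cons 0 (Fin.cons 2 h) : Fin (k+4) → Fin 3)) '' S2set (k+2)) := by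
    rw [Set.disjoint_left]
    rintro f ⟨g, _, rfl⟩ ⟨h, _, hf⟩
    have hf2 : Fin.cons (0:Fin 3) (Fin.cons 2 h) = (Fin.cons 1 g : Fin (k+4) → Fin 3) := hf
    have := v1 g
    rw [← hf2, v2 h] at this
    omega
  have d123 : Disjoint
      (((fun g : Fin (k+3) → Fin 3 => (Fin.cons 1 g : Fin (k+4) → Fin 3)) '' SBset (k+3)) ∪
        ((fun h : Fin (k+2) → Fin 3 => (Fin.cons 0 (Fin.cons 2 h) : Fin (k+4) → Fin 3)) '' S2set (k+2)))
      ((fun w : Fin (k+1) → Fin 3 => (Fin.cons 0 (Fin.cons 2 (Fin.cons 0 w)) : Fin (k+4) → Fin 3)) '' SAset (k+1)) := by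
    rw [Set.disjoint_left]
    rintro f (⟨g, _, rfl⟩ | ⟨h, hh, rfl⟩) ⟨w, _, hf⟩
    · have hf2 : Fin.cons (0:Fin 3) (Fin.cons 2 (Fin.cons 0 w)) = (Fin.cons 1 g : Fin (k+4) → Fin 3) := hf
      have := v1 g
      rw [← hf2, v3 w] at this
      omega
    · have h2 : extf (Fin.cons (0:Fin 3) (Fin.cons 2 h) : Fin (k+4) → Fin 3) 2 = 2 := by
        rw [v2' h, ← eq2_iff h (by omega)]
        exact hh.2
      have hf2 : Fin.cons (0:Fin 3) (Fin.cons 2 (Fin.cons 0 w)) = (Fin.cons 0 (Fin.cons 2 h) : Fin (k+4) → Fin 3) := hf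
      rw [← hf2, v3' w] at h2
      omega
  rw [SB_decomp k, Set.ncard_union_eq d123 (Set.toFinite _) (Set.toFinite _),
    Set.ncard_union_eq d12 (Set.toFinite _) (Set.toFinite _),
    Set.ncard_image_of_injective _ inj1, Set.ncard_image_of_injective _ inj2,
    Set.ncard_image_of_injective _ inj3]


lemma CPbar2_eq (n : ℕ) : CPbar2 n = (SBset n).ncard :=
  congrArg Set.ncard (Set.ext fun f => and_congr_left' (charG f))

lemma CP2_eq (n : ℕ) : CP2 n = (S2set n).ncard :=
  congrArg Set.ncard (Set.ext fun f => and_congr_left' (charG f))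

lemma CP_eq (n : ℕ) : CP n = (SAset n).ncard :=
  congrArg Set.ncard (Set.ext fun f => charG f)

/-- Recursion for `C_{P,2̄,n}`: initial values `1, 2, 3` for `n = 1, 2, 3`, and
`C_{P,2̄,n} = C_{P,2̄,n-1} + C_{P,2,n-2} + C_{P,n-3}` for `n > 3`. -/
theorem CPbar2_recursion :
    CPbar2 1 = 1 ∧ CPbar2 2 = 2 ∧ CPbar2 3 = 3 ∧
    ∀ n : ℕ, 3 < n → CPbar2 n = CPbar2 (n - 1) + CP2 (n - 2) + CP (n - 3) := by
  refine ⟨?_, ?_, ?_, ?_⟩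
  · unfold CPbar2
    rw [Set.ncard_eq_toFinset_card']
    decide
  · unfold CPbar2
    rw [Set.ncard_eq_toFinset_card']
    decide
  · unfold CPbar2
    rw [Set.ncard_eq_toFinset_card']
    decide
  · intro n hn
    obtain ⟨k, rfl⟩ : ∃ k, n = k + 4 := ⟨n - 4, by omega⟩
    have e1 : k + 4 - 1 = k + 3 := by omega
    have e2 : k + 4 - 2 = k + 2 := by omega
    have e3 : k + 4 - 3 = k + 1 := by omega
    rw [e1, e2, e3, CPbar2_eq, CPbar2_eq, CP2_eq, CP_eq]
    exact ncard_SB k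
end

section
/- Let α be the unique real root of x³ = x² + 1 (so 1.46 < α < 1.47). There exists a polynomial p such that every split graph of order n has at most p(n) · α^n minimal Roman dominating functions. -/
/-
  ===================  Auxiliary development ===================
-/

open Finset

attribute [local instance 10] Classical.propDecidable

section Arith

variable {α : ℝ}

private lemma alpha_id6 (hroot : α ^ 3 = α ^ 2 + 1) : α ^ 6 = α ^ 5 + α ^ 2 + 1 := by
  linear_combination (α ^ 3 + 1) * hroot

private lemma alpha_id7 (hroot : α ^ 3 = α ^ 2 + 1) : α ^ 7 = α ^ 6 + α ^ 2 + α + 1 := by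
  linear_combination (α ^ 4 + α + 1) * hroot

private lemma AR_pow_le (hlo : 1.46 < α) {m μ : ℕ} (h : m ≤ μ) : α ^ m ≤ α ^ μ :=
  pow_le_pow_right₀ (by norm_num at hlo ⊢; linarith) h

private lemma ARdouble (hlo : 1.46 < α) {m μ : ℕ} (h : m + 2 ≤ μ) :
    2 * α ^ m ≤ α ^ μ := by
  have h1 : (1:ℝ) ≤ α := by norm_num at hlo; linarith
  have h2 : 2 * α ^ m ≤ α ^ (m + 2) := by
    have e : α ^ (m + 2) = (α * α) * α ^ m := by ring
    have e2 : (2:ℝ) ≤ α * α := by nlinarith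
    rw [e]
    exact mul_le_mul_of_nonneg_right e2 (pow_nonneg (by linarith) m)
  exact h2.trans (AR_pow_le hlo h)

private lemma AR2 (hroot : α ^ 3 = α ^ 2 + 1) (hlo : 1.46 < α) {m0 m1 μ : ℕ}
    (h0 : m0 + 1 ≤ μ) (h1 : m1 + 3 ≤ μ) : α ^ m0 + α ^ m1 ≤ α ^ μ := by
  obtain ⟨k, rfl⟩ : ∃ k, μ = k + 3 := ⟨μ - 3, by omega⟩
  have key : α ^ (k + 3) = α ^ (k + 2) + α ^ k := by
    have : α ^ (k + 3) = α ^ k * α ^ 3 := by ring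
    rw [this, hroot]; ring
  have e0 : α ^ m0 ≤ α ^ (k + 2) := AR_pow_le hlo (by omega)
  have e1 : α ^ m1 ≤ α ^ k := AR_pow_le hlo (by omega)
  linarith

private lemma AR3 (hroot : α ^ 3 = α ^ 2 + 1) (hlo : 1.46 < α) {m0 m1 m2 μ : ℕ}
    (h0 : m0 + 1 ≤ μ) (h1 : m1 + 4 ≤ μ) (h2 : m2 + 6 ≤ μ) :
    α ^ m0 + α ^ m1 + α ^ m2 ≤ α ^ μ := by
  obtain ⟨k, rfl⟩ : ∃ k, μ = k + 6 := ⟨μ - 6, by omega⟩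
  have key : α ^ (k + 6) = α ^ (k + 5) + α ^ (k + 2) + α ^ k := by
    have h6 := alpha_id6 hroot
    have : α ^ (k + 6) = α ^ k * α ^ 6 := by ring
    rw [this, h6]; ring
  have e0 : α ^ m0 ≤ α ^ (k + 5) := AR_pow_le hlo (by omega)
  have e1 : α ^ m1 ≤ α ^ (k + 2) := AR_pow_le hlo (by omega)
  have e2 : α ^ m2 ≤ α ^ k := AR_pow_le hlo (by omega)
  linarith

private lemma AR4 (hroot : α ^ 3 = α ^ 2 + 1) (hlo : 1.46 < α) {m0 m1 m2 m3 μ : ℕ}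
    (h0 : m0 + 1 ≤ μ) (h1 : m1 + 5 ≤ μ) (h2 : m2 + 6 ≤ μ) (h3 : m3 + 7 ≤ μ) :
    α ^ m0 + α ^ m1 + α ^ m2 + α ^ m3 ≤ α ^ μ := by
  obtain ⟨k, rfl⟩ : ∃ k, μ = k + 7 := ⟨μ - 7, by omega⟩
  have key : α ^ (k + 7) = α ^ (k + 6) + α ^ (k + 2) + α ^ (k + 1) + α ^ k := by
    have h7 := alpha_id7 hroot
    have : α ^ (k + 7) = α ^ k * α ^ 7 := by ring
    rw [this, h7]; ring
  have e0 : α ^ m0 ≤ α ^ (k + 6) := AR_pow_le hlo (by omega)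
  have e1 : α ^ m1 ≤ α ^ (k + 2) := AR_pow_le hlo (by omega)
  have e2 : α ^ m2 ≤ α ^ (k + 1) := AR_pow_le hlo (by omega)
  have e3 : α ^ m3 ≤ α ^ k := AR_pow_le hlo (by omega)
  linarith

end Arith

section CoverLemmas

variable {β : Type*}

private lemma card_cover2 (s : Finset β) (P1 P2 : β → Prop)
    [DecidablePred P1] [DecidablePred P2]
    (h : ∀ x ∈ s, P1 x ∨ P2 x) :
    s.card ≤ (s.filter P1).card + (s.filter P2).card := by
  have hsub : s ⊆ s.filter P1 ∪ s.filter P2 := by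
    intro x hx
    rcases h x hx with h1 | h2
    · exact mem_union_left _ (mem_filter.mpr ⟨hx, h1⟩)
    · exact mem_union_right _ (mem_filter.mpr ⟨hx, h2⟩)
  exact (card_le_card hsub).trans (card_union_le _ _)

private lemma card_cover3 (s : Finset β) (P1 P2 P3 : β → Prop)
    [DecidablePred P1] [DecidablePred P2] [DecidablePred P3]
    (h : ∀ x ∈ s, P1 x ∨ P2 x ∨ P3 x) :
    s.card ≤ (s.filter P1).card + (s.filter P2).card + (s.filter P3).card := by
  have hsub : s ⊆ s.filter P1 ∪ s.filter P2 ∪ s.filter P3 := by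
    intro x hx
    rcases h x hx with h1 | h2 | h3
    · exact mem_union_left _ (mem_union_left _ (mem_filter.mpr ⟨hx, h1⟩))
    · exact mem_union_left _ (mem_union_right _ (mem_filter.mpr ⟨hx, h2⟩))
    · exact mem_union_right _ (mem_filter.mpr ⟨hx, h3⟩)
  calc s.card ≤ (s.filter P1 ∪ s.filter P2 ∪ s.filter P3).card := card_le_card hsub
    _ ≤ (s.filter P1 ∪ s.filter P2).card + (s.filter P3).card := card_union_le _ _
    _ ≤ (s.filter P1).card + (s.filter P2).card + (s.filter P3).card :=
        Nat.add_le_add_right (card_union_le _ _) _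

private lemma card_cover4 (s : Finset β) (P1 P2 P3 P4 : β → Prop)
    [DecidablePred P1] [DecidablePred P2] [DecidablePred P3] [DecidablePred P4]
    (h : ∀ x ∈ s, P1 x ∨ P2 x ∨ P3 x ∨ P4 x) :
    s.card ≤ (s.filter P1).card + (s.filter P2).card + (s.filter P3).card
      + (s.filter P4).card := by
  have hsub : s ⊆ s.filter P1 ∪ s.filter P2 ∪ s.filter P3 ∪ s.filter P4 := by
    intro x hx
    rcases h x hx with h1 | h2 | h3 | h4
    · exact mem_union_left _ (mem_union_left _ (mem_union_left _ (mem_filter.mpr ⟨hx, h1⟩)))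
    · exact mem_union_left _ (mem_union_left _ (mem_union_right _ (mem_filter.mpr ⟨hx, h2⟩)))
    · exact mem_union_left _ (mem_union_right _ (mem_filter.mpr ⟨hx, h3⟩))
    · exact mem_union_right _ (mem_filter.mpr ⟨hx, h4⟩)
  calc s.card ≤ (s.filter P1 ∪ s.filter P2 ∪ s.filter P3 ∪ s.filter P4).card :=
        card_le_card hsub
    _ ≤ (s.filter P1 ∪ s.filter P2 ∪ s.filter P3).card + (s.filter P4).card :=
        card_union_le _ _
    _ ≤ ((s.filter P1 ∪ s.filter P2).card + (s.filter P3).card) + (s.filter P4).card :=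
        Nat.add_le_add_right (card_union_le _ _) _
    _ ≤ _ := Nat.add_le_add_right (Nat.add_le_add_right (card_union_le _ _) _) _

end CoverLemmas

set_option linter.unusedSectionVars false

section Core

variable {V : Type} [Fintype V] [DecidableEq V] (R : V → V → Prop)

/-- Global neighborhood (on the `X` side) of a `Y`-vertex `u`. -/
noncomputable def NBg (u : V) : Finset V := Finset.univ.filter (fun x => R x u)

/-- Neighborhood inside `Y` of an `X`-vertex `v`. -/
noncomputable def NY (Y : Finset V) (v : V) : Finset V := Y.filter (fun u => R v u)

variable {R} in
lemma mem_NBg {u x : V} : x ∈ NBg R u ↔ R x u := by simp [NBg]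

variable {R} in
lemma mem_NY {Y : Finset V} {v u : V} : u ∈ NY R Y v ↔ u ∈ Y ∧ R v u := by simp [NY]

/-- `S` is a "good" set: every element has a private `Y`-neighbor. -/
def IsGood (Y : Finset V) (S : Finset V) : Prop :=
  ∀ v ∈ S, ∃ u ∈ Y, NBg R u ∩ S = {v}

/-- The collection of all good subsets of `X`. -/
noncomputable def GoodSet (X Y : Finset V) : Finset (Finset V) :=
  X.powerset.filter (IsGood R Y)

lemma mem_GoodSet {X Y S : Finset V} :
    S ∈ GoodSet R X Y ↔ S ⊆ X ∧ IsGood R Y S := by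
  simp [GoodSet, mem_filter, mem_powerset]

lemma GoodSet_empty (Y : Finset V) : GoodSet R ∅ Y = {∅} := by
  ext S
  simp only [mem_GoodSet, mem_singleton, subset_empty]
  constructor
  · exact fun h => h.1
  · rintro rfl
    exact ⟨rfl, fun v hv => absurd hv (notMem_empty v)⟩

/-- Transfer lemma: removing decided vertices preserves goodness. -/
lemma transfer {X Y S W D Z : Finset V} (hSX : S ⊆ X) (hg : IsGood R Y S)
    (hW : W ⊆ S) (hD : S ∩ D ⊆ W)
    (hZ : ∀ u ∈ Z, ((W ∩ NBg R u) ∩ S).Nonempty) :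
    S \ W ∈ GoodSet R (X \ D) (Y \ Z) := by
  rw [mem_GoodSet]
  constructor
  · intro x hx
    rw [mem_sdiff] at hx ⊢
    exact ⟨hSX hx.1, fun hxD => hx.2 (hD (mem_inter.mpr ⟨hx.1, hxD⟩))⟩
  · intro v hv
    rw [mem_sdiff] at hv
    obtain ⟨u, hu, huS⟩ := hg v hv.1
    refine ⟨u, ?_, ?_⟩
    · rw [mem_sdiff]
      refine ⟨hu, fun huZ => ?_⟩
      obtain ⟨y, hy⟩ := hZ u huZ
      rw [mem_inter, mem_inter] at hy
      have hyv : y ∈ NBg R u ∩ S := mem_inter.mpr ⟨hy.1.2, hy.2⟩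
      rw [huS, mem_singleton] at hyv
      exact hv.2 (hyv ▸ hy.1.1)
    · have h1 : NBg R u ∩ (S \ W) = (NBg R u ∩ S) \ W := by
        ext x
        simp only [mem_inter, mem_sdiff]
        tauto
      rw [h1, huS]
      ext x
      simp only [mem_sdiff, mem_singleton]
      constructor
      · exact fun h => h.1
      · rintro rfl
        exact ⟨rfl, hv.2⟩

/-- Counting a branch via the (injective) map `S ↦ S \ W`. -/
lemma branch_card {X Y X' Y' : Finset V} (P : Finset V → Prop) [DecidablePred P] (W : Finset V)
    (h : ∀ S ∈ GoodSet R X Y, P S → W ⊆ S ∧ S \ W ∈ GoodSet R X' Y') :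
    ((GoodSet R X Y).filter P).card ≤ (GoodSet R X' Y').card := by
  apply Finset.card_le_card_of_injOn (fun S => S \ W)
  · intro S hS
    rw [mem_coe, mem_filter] at hS
    exact (h S hS.1 hS.2).2
  · intro S1 h1 S2 h2 heq
    simp only [mem_coe, mem_filter] at h1 h2
    have e1 := (h S1 h1.1 h1.2).1
    have e2 := (h S2 h2.1 h2.2).1
    calc S1 = S1 \ W ∪ W := (sdiff_union_of_subset e1).symm
      _ = S2 \ W ∪ W := by simp only at heq; rw [heq]
      _ = S2 := sdiff_union_of_subset e2

/-- Budget lemma for measures. -/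
lemma sdiff_budget {X D E : Finset V} (hEX : E ⊆ X) (hED : E ⊆ D) :
    (X \ D).card + E.card ≤ X.card := by
  have hdisj : Disjoint (X \ D) E :=
    disjoint_left.mpr (fun a ha hae => (mem_sdiff.mp ha).2 (hED hae))
  rw [← card_union_of_disjoint hdisj]
  exact card_le_card (union_subset sdiff_subset hEX)

lemma card3 {a b c : V} (hab : a ≠ b) (hac : a ≠ c) (hbc : b ≠ c) :
    ({a, b, c} : Finset V).card = 3 := by
  rw [card_insert_of_notMem (by simp [hab, hac]),
    card_insert_of_notMem (by simp [hbc]), card_singleton]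

lemma card4 {a b c d : V} (hab : a ≠ b) (hac : a ≠ c) (had : a ≠ d)
    (hbc : b ≠ c) (hbd : b ≠ d) (hcd : c ≠ d) :
    ({a, b, c, d} : Finset V).card = 4 := by
  rw [card_insert_of_notMem (by simp [hab, hac, had]),
    card_insert_of_notMem (by simp [hbc, hbd]),
    card_insert_of_notMem (by simp [hcd]), card_singleton]

end Core

section CoreBound

variable {V : Type} [Fintype V] [DecidableEq V]

theorem core_bound (R : V → V → Prop) {α : ℝ}
    (hroot : α ^ 3 = α ^ 2 + 1) (hlo : 1.46 < α) :
    ∀ (N : ℕ) (X Y : Finset V), X.card + Y.card ≤ N →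
      ((GoodSet R X Y).card : ℝ) ≤ α ^ (X.card + Y.card) := by
  have hα1 : (1:ℝ) ≤ α := by norm_num at hlo; linarith
  intro N
  induction N with
  | zero =>
    intro X Y h
    have hX : X = ∅ := card_eq_zero.mp (by omega)
    subst hX
    rw [GoodSet_empty]
    simpa using one_le_pow₀ hα1
  | succ n ih =>
    intro X Y hN
    by_cases hXe : X = ∅
    · subst hXe
      rw [GoodSet_empty]
      simpa using one_le_pow₀ hα1
    -- the "v ∉ S" branch, common to all cases
    have hQ0 : ∀ v : V, ((GoodSet R X Y).filter (fun S => v ∉ S)).card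
        ≤ (GoodSet R (X \ {v}) (Y \ ∅)).card := by
      intro v
      apply branch_card R _ ∅
      intro S hS hP
      rw [mem_GoodSet] at hS
      refine ⟨empty_subset _, transfer R hS.1 hS.2 (empty_subset _) ?_ ?_⟩
      · intro x hx
        rw [mem_inter, mem_singleton] at hx
        exact absurd (hx.2 ▸ hx.1) hP
      · intro u huZ
        exact absurd huZ (notMem_empty u)
    by_cases hR0 : ∃ u ∈ Y, NBg R u ∩ X = ∅
    · obtain ⟨u, huY, hu⟩ := hR0
      have hsub : GoodSet R X Y ⊆ GoodSet R X (Y.erase u) := by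
        intro S hS
        rw [mem_GoodSet] at hS ⊢
        refine ⟨hS.1, fun v hv => ?_⟩
        obtain ⟨u', hu', h'⟩ := hS.2 v hv
        refine ⟨u', mem_erase.mpr ⟨fun he => ?_, hu'⟩, h'⟩
        subst he
        have hv' : v ∈ NBg R u' ∩ S := by rw [h']; exact mem_singleton_self v
        have hvv : v ∈ NBg R u' ∩ X :=
          mem_inter.mpr ⟨(mem_inter.mp hv').1, hS.1 (mem_inter.mp hv').2⟩
        rw [hu] at hvv
        exact absurd hvv (notMem_empty v)
      have hY1 : 1 ≤ Y.card := card_pos.mpr ⟨u, huY⟩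
      have hcerase : (Y.erase u).card = Y.card - 1 := card_erase_of_mem huY
      calc ((GoodSet R X Y).card : ℝ)
          ≤ ((GoodSet R X (Y.erase u)).card : ℝ) := by exact_mod_cast card_le_card hsub
        _ ≤ α ^ (X.card + (Y.erase u).card) := ih _ _ (by omega)
        _ ≤ α ^ (X.card + Y.card) := AR_pow_le hlo (by omega)
    by_cases hR1 : ∃ v ∈ X, NY R Y v = ∅
    · obtain ⟨v, hvX, hv⟩ := hR1
      have hsub : GoodSet R X Y ⊆ GoodSet R (X.erase v) Y := by
        intro S hS
        rw [mem_GoodSet] at hS ⊢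
        refine ⟨fun x hx => mem_erase.mpr ⟨fun he => ?_, hS.1 hx⟩, hS.2⟩
        obtain ⟨u, huY, h'⟩ := hS.2 x hx
        have hx' : x ∈ NBg R u ∩ S := by rw [h']; exact mem_singleton_self x
        have hRx : R x u := mem_NBg.mp (mem_inter.mp hx').1
        have hmem : u ∈ NY R Y x := mem_NY.mpr ⟨huY, hRx⟩
        rw [he, hv] at hmem
        exact absurd hmem (notMem_empty u)
      have hX1 : 1 ≤ X.card := card_pos.mpr ⟨v, hvX⟩
      have hcerase : (X.erase v).card = X.card - 1 := card_erase_of_mem hvX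
      calc ((GoodSet R X Y).card : ℝ)
          ≤ ((GoodSet R (X.erase v) Y).card : ℝ) := by exact_mod_cast card_le_card hsub
        _ ≤ α ^ ((X.erase v).card + Y.card) := ih _ _ (by omega)
        _ ≤ α ^ (X.card + Y.card) := AR_pow_le hlo (by omega)
    by_cases hR2 : ∃ u ∈ Y, ∃ w, NBg R u ∩ X = {w}
    · obtain ⟨u, huY, w, hu⟩ := hR2
      have hwX : w ∈ X := by
        have hmem : w ∈ NBg R u ∩ X := by rw [hu]; exact mem_singleton_self w
        exact (mem_inter.mp hmem).2
      have himg : ∀ S ∈ GoodSet R X Y, S.erase w ∈ GoodSet R (X.erase w) (Y.erase u) := by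
        intro S hS
        rw [mem_GoodSet] at hS ⊢
        constructor
        · intro x hx
          rw [mem_erase] at hx ⊢
          exact ⟨hx.1, hS.1 hx.2⟩
        · intro x hx
          rw [mem_erase] at hx
          obtain ⟨u', hu', h'⟩ := hS.2 x hx.2
          have hne : u' ≠ u := by
            intro he; subst he
            have hx' : x ∈ NBg R u' ∩ S := by rw [h']; exact mem_singleton_self x
            have hxx : x ∈ NBg R u' ∩ X :=
              mem_inter.mpr ⟨(mem_inter.mp hx').1, hS.1 (mem_inter.mp hx').2⟩
            rw [hu] at hxx
            exact hx.1 (mem_singleton.mp hxx)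
          refine ⟨u', mem_erase.mpr ⟨hne, hu'⟩, ?_⟩
          rw [inter_erase, h']
          exact erase_eq_of_notMem (by simp [Ne.symm hx.1])
      have h2a : (GoodSet R X Y).card
          ≤ 2 * ((GoodSet R X Y).image (fun S => S.erase w)).card := by
        apply card_le_mul_card_image
        intro T _
        have hsub2 : (GoodSet R X Y).filter (fun S => S.erase w = T)
            ⊆ {T, insert w T} := by
          intro S hS
          rw [mem_filter] at hS
          rw [mem_insert, mem_singleton]
          by_cases hw : w ∈ S
          · right; rw [← hS.2, insert_erase hw]
          · left; rw [← hS.2, erase_eq_of_notMem hw]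
        calc ((GoodSet R X Y).filter (fun S => S.erase w = T)).card
            ≤ ({T, insert w T} : Finset (Finset V)).card := card_le_card hsub2
          _ ≤ 2 := by
              refine (card_insert_le _ _).trans ?_
              simp
      have h2b : ((GoodSet R X Y).image (fun S => S.erase w))
          ⊆ GoodSet R (X.erase w) (Y.erase u) := by
        intro T hT
        obtain ⟨S, hS, rfl⟩ := mem_image.mp hT
        exact himg S hS
      have hX1 : 1 ≤ X.card := card_pos.mpr ⟨w, hwX⟩
      have hY1 : 1 ≤ Y.card := card_pos.mpr ⟨u, huY⟩
      have hcx : (X.erase w).card = X.card - 1 := card_erase_of_mem hwX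
      have hcy : (Y.erase u).card = Y.card - 1 := card_erase_of_mem huY
      have hih := ih (X.erase w) (Y.erase u) (by omega)
      calc ((GoodSet R X Y).card : ℝ)
          ≤ 2 * ((GoodSet R (X.erase w) (Y.erase u)).card : ℝ) := by
            exact_mod_cast h2a.trans (Nat.mul_le_mul_left 2 (card_le_card h2b))
        _ ≤ 2 * α ^ ((X.erase w).card + (Y.erase u).card) := by linarith
        _ ≤ α ^ (X.card + Y.card) := ARdouble hlo (by omega)
    by_cases hC3 : ∃ v ∈ X, ∃ u1, NY R Y v = {u1}
    · obtain ⟨v, hvX, u1, hNYv⟩ := hC3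
      have hu1 : u1 ∈ NY R Y v := by rw [hNYv]; exact mem_singleton_self u1
      have hu1Y : u1 ∈ Y := (mem_NY.mp hu1).1
      have hRvu1 : R v u1 := (mem_NY.mp hu1).2
      push_neg at hR0 hR2
      have hd1 : 2 ≤ (NBg R u1 ∩ X).card := by
        have h0 : (NBg R u1 ∩ X).card ≠ 0 := fun h => (hR0 u1 hu1Y).ne_empty (card_eq_zero.mp h)
        have h1 : (NBg R u1 ∩ X).card ≠ 1 := by
          intro h
          obtain ⟨w, hw⟩ := card_eq_one.mp h
          exact hR2 u1 hu1Y w hw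
        omega
      have hb1 : ((GoodSet R X Y).filter (fun S => v ∈ S)).card
          ≤ (GoodSet R (X \ (NBg R u1 ∩ X)) (Y \ {u1})).card := by
        apply branch_card R _ {v}
        intro S hS hP
        rw [mem_GoodSet] at hS
        have hwit : NBg R u1 ∩ S = {v} := by
          obtain ⟨u, huY, h'⟩ := hS.2 v hP
          have hv' : v ∈ NBg R u ∩ S := by rw [h']; exact mem_singleton_self v
          have hmem : u ∈ NY R Y v := mem_NY.mpr ⟨huY, mem_NBg.mp (mem_inter.mp hv').1⟩
          rw [hNYv, mem_singleton] at hmem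
          subst hmem
          exact h'
        refine ⟨singleton_subset_iff.mpr hP,
          transfer R hS.1 hS.2 (singleton_subset_iff.mpr hP) ?_ ?_⟩
        · intro x hx
          rw [mem_inter] at hx
          have hxm : x ∈ NBg R u1 ∩ S := mem_inter.mpr ⟨(mem_inter.mp hx.2).1, hx.1⟩
          rw [hwit] at hxm
          exact hxm
        · intro u huZ
          rw [mem_singleton] at huZ
          subst huZ
          exact ⟨v, mem_inter.mpr ⟨mem_inter.mpr
            ⟨mem_singleton_self _, mem_NBg.mpr hRvu1⟩, hP⟩⟩
      have hmv : (X \ {v}).card + 1 ≤ X.card := by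
        have := sdiff_budget (X := X) (D := {v}) (E := {v})
          (singleton_subset_iff.mpr hvX) Subset.rfl
        simpa using this
      have hmyempty : (Y \ (∅ : Finset V)).card = Y.card := by simp
      have hmP1x : (X \ (NBg R u1 ∩ X)).card + (NBg R u1 ∩ X).card ≤ X.card :=
        sdiff_budget inter_subset_right Subset.rfl
      have hmP1y : (Y \ ({u1} : Finset V)).card + 1 ≤ Y.card := by
        have := sdiff_budget (X := Y) (D := {u1}) (E := {u1})
          (singleton_subset_iff.mpr hu1Y) Subset.rfl
        simpa using this
      have hcov := card_cover2 (GoodSet R X Y) (fun S => v ∉ S) (fun S => v ∈ S)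
        (fun S _ => (em (v ∈ S)).symm)
      have t0 : (((GoodSet R X Y).filter (fun S => v ∉ S)).card : ℝ)
          ≤ α ^ ((X \ {v}).card + (Y \ (∅ : Finset V)).card) :=
        le_trans (Nat.cast_le.mpr (hQ0 v)) (ih _ _ (by omega))
      have t1 : (((GoodSet R X Y).filter (fun S => v ∈ S)).card : ℝ)
          ≤ α ^ ((X \ (NBg R u1 ∩ X)).card + (Y \ ({u1} : Finset V)).card) :=
        le_trans (Nat.cast_le.mpr hb1) (ih _ _ (by omega))
      calc ((GoodSet R X Y).card : ℝ)
          ≤ (((GoodSet R X Y).filter (fun S => v ∉ S)).card : ℝ)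
            + (((GoodSet R X Y).filter (fun S => v ∈ S)).card : ℝ) := by exact_mod_cast hcov
        _ ≤ α ^ ((X \ {v}).card + (Y \ (∅ : Finset V)).card)
            + α ^ ((X \ (NBg R u1 ∩ X)).card + (Y \ ({u1} : Finset V)).card) :=
            add_le_add t0 t1
        _ ≤ α ^ (X.card + Y.card) := AR2 hroot hlo (by omega) (by omega)
    by_cases hC4 : ∃ v ∈ X, (NY R Y v).card = 2
    · obtain ⟨v, hvX, hv2⟩ := hC4
      obtain ⟨a0, b0', hab, hNYv0⟩ := card_eq_two.mp hv2
      obtain ⟨u1, u2, hne12, hNYv, hdle⟩ : ∃ u1 u2, u1 ≠ u2 ∧ NY R Y v = {u1, u2}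
          ∧ (NBg R u1 ∩ X).card ≤ (NBg R u2 ∩ X).card := by
        rcases le_total ((NBg R a0 ∩ X).card) ((NBg R b0' ∩ X).card) with h | h
        · exact ⟨a0, b0', hab, hNYv0, h⟩
        · exact ⟨b0', a0, hab.symm, by rw [hNYv0, pair_comm], h⟩
      have hu1 : u1 ∈ NY R Y v := by rw [hNYv]; exact mem_insert_self _ _
      have hu2 : u2 ∈ NY R Y v := by rw [hNYv]; exact mem_insert_of_mem (mem_singleton_self _)
      have hu1Y : u1 ∈ Y := (mem_NY.mp hu1).1
      have hu2Y : u2 ∈ Y := (mem_NY.mp hu2).1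
      have hRvu1 : R v u1 := (mem_NY.mp hu1).2
      have hRvu2 : R v u2 := (mem_NY.mp hu2).2
      push_neg at hR0 hR1 hR2 hC3
      have hdeg : ∀ u ∈ Y, 2 ≤ (NBg R u ∩ X).card := by
        intro u huY
        have h0 : (NBg R u ∩ X).card ≠ 0 := fun h => (hR0 u huY).ne_empty (card_eq_zero.mp h)
        have h1 : (NBg R u ∩ X).card ≠ 1 := by
          intro h
          obtain ⟨w, hw⟩ := card_eq_one.mp h
          exact hR2 u huY w hw
        omega
      have hd1 : 2 ≤ (NBg R u1 ∩ X).card := hdeg u1 hu1Y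
      have hd2 : 2 ≤ (NBg R u2 ∩ X).card := hdeg u2 hu2Y
      have hXdeg : ∀ x ∈ X, 2 ≤ (NY R Y x).card := by
        intro x hx
        have h0 : (NY R Y x).card ≠ 0 := fun h => (hR1 x hx).ne_empty (card_eq_zero.mp h)
        have h1 : (NY R Y x).card ≠ 1 := by
          intro h
          obtain ⟨w, hw⟩ := card_eq_one.mp h
          exact hC3 x hx w hw
        omega
      set A := (NBg R u1 ∩ X).erase v with hA
      set B := (NBg R u2 ∩ X).erase v with hB
      have hvN1 : v ∈ NBg R u1 ∩ X := mem_inter.mpr ⟨mem_NBg.mpr hRvu1, hvX⟩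
      have hvN2 : v ∈ NBg R u2 ∩ X := mem_inter.mpr ⟨mem_NBg.mpr hRvu2, hvX⟩
      have hcA : A.card + 1 = (NBg R u1 ∩ X).card := by
        rw [hA, card_erase_of_mem hvN1]
        omega
      have hcB : B.card + 1 = (NBg R u2 ∩ X).card := by
        rw [hB, card_erase_of_mem hvN2]
        omega
      obtain ⟨b0, hb0B⟩ : B.Nonempty := card_pos.mp (by omega)
      have hb0X : b0 ∈ X := (mem_inter.mp (mem_of_mem_erase hb0B)).2
      have hb0v : b0 ≠ v := ne_of_mem_erase hb0B
      -- key structural fact for the branch `v ∈ S`, `u1` not a private of `v`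
      have hwit2 : ∀ S, S ∈ GoodSet R X Y → v ∈ S → NBg R u1 ∩ S ≠ {v} →
          NBg R u2 ∩ S = {v} ∧ ∃ x, x ∈ S ∧ x ∈ A ∧ x ∉ B := by
        intro S hS hvS hne1
        rw [mem_GoodSet] at hS
        obtain ⟨u, huY, hu⟩ := hS.2 v hvS
        have hvmem' : v ∈ NBg R u ∩ S := by rw [hu]; exact mem_singleton_self v
        have huNY : u ∈ NY R Y v := mem_NY.mpr ⟨huY, mem_NBg.mp (mem_inter.mp hvmem').1⟩
        rw [hNYv, mem_insert, mem_singleton] at huNY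
        have hP2 : NBg R u2 ∩ S = {v} := by
          rcases huNY with rfl | rfl
          · exact absurd hu hne1
          · exact hu
        have hvmem : v ∈ NBg R u1 ∩ S := mem_inter.mpr ⟨mem_NBg.mpr hRvu1, hvS⟩
        obtain ⟨x, hxmem, hxv⟩ : ∃ x ∈ NBg R u1 ∩ S, x ≠ v := by
          by_contra hcon
          push_neg at hcon
          exact hne1 (eq_singleton_iff_unique_mem.mpr ⟨hvmem, hcon⟩)
        rw [mem_inter] at hxmem
        have hxX : x ∈ X := hS.1 hxmem.2
        have hxA : x ∈ A := by
          rw [hA]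
          exact mem_erase.mpr ⟨hxv, mem_inter.mpr ⟨hxmem.1, hxX⟩⟩
        have hxB : x ∉ B := by
          intro hxB
          have hxm : x ∈ NBg R u2 ∩ S :=
            mem_inter.mpr ⟨(mem_inter.mp (mem_of_mem_erase hxB)).1, hxmem.2⟩
          rw [hP2, mem_singleton] at hxm
          exact hxv hxm
        exact ⟨hP2, x, hxmem.2, hxA, hxB⟩
      -- the `P1` branch (`v ∈ S` with `u1` a private of `v`)
      have hbP1 : ((GoodSet R X Y).filter (fun S => v ∈ S ∧ NBg R u1 ∩ S = {v})).card
          ≤ (GoodSet R (X \ (NBg R u1 ∩ X)) (Y \ {u1, u2})).card := by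
        apply branch_card R _ {v}
        intro S hS hP
        rw [mem_GoodSet] at hS
        refine ⟨singleton_subset_iff.mpr hP.1,
          transfer R hS.1 hS.2 (singleton_subset_iff.mpr hP.1) ?_ ?_⟩
        · intro x hx
          rw [mem_inter] at hx
          have hxm : x ∈ NBg R u1 ∩ S := mem_inter.mpr ⟨(mem_inter.mp hx.2).1, hx.1⟩
          rw [hP.2] at hxm
          exact hxm
        · intro u huZ
          rw [mem_insert, mem_singleton] at huZ
          rcases huZ with rfl | rfl
          · exact ⟨v, mem_inter.mpr ⟨mem_inter.mpr
              ⟨mem_singleton_self _, mem_NBg.mpr hRvu1⟩, hP.1⟩⟩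
          · exact ⟨v, mem_inter.mpr ⟨mem_inter.mpr
              ⟨mem_singleton_self _, mem_NBg.mpr hRvu2⟩, hP.1⟩⟩
      -- generic bound for the second sub-branch
      have hQ2gen : ∀ (x : V) (F : Finset V), x ∈ A → x ∉ B → v ∉ F → x ∉ F →
          ∀ (P : Finset V → Prop) (instP : DecidablePred P),
          (∀ S ∈ GoodSet R X Y, P S →
            v ∈ S ∧ NBg R u2 ∩ S = {v} ∧ x ∈ S ∧ ∀ y ∈ F, y ∉ S) →
          (@Finset.filter _ P instP (GoodSet R X Y)).card
            ≤ (GoodSet R (X \ (insert v (insert x (B ∪ F))))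
                (Y \ (insert u1 (insert u2 (NY R Y x))))).card := by
        intro x F hxA hxB hvF hxF P instP hPimp
        apply branch_card R P {v, x}
        intro S hS hP
        obtain ⟨hvS, hP2, hxS, hFS⟩ := hPimp S hS hP
        rw [mem_GoodSet] at hS
        have hWS : ({v, x} : Finset V) ⊆ S := by
          intro y hy
          rw [mem_insert, mem_singleton] at hy
          rcases hy with rfl | rfl
          · exact hvS
          · exact hxS
        refine ⟨hWS, transfer R hS.1 hS.2 hWS ?_ ?_⟩
        · intro y hy
          rw [mem_inter, mem_insert, mem_insert] at hy
          rcases hy.2 with rfl | hy2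
          · exact mem_insert_self _ _
          rcases hy2 with rfl | hy3
          · exact mem_insert_of_mem (mem_singleton_self _)
          rcases mem_union.mp hy3 with hyB | hyF
          · have hym : y ∈ NBg R u2 ∩ S :=
              mem_inter.mpr ⟨(mem_inter.mp (mem_of_mem_erase hyB)).1, hy.1⟩
            rw [hP2, mem_singleton] at hym
            subst hym
            exact mem_insert_self _ _
          · exact absurd hy.1 (hFS y hyF)
        · intro u huZ
          rw [mem_insert, mem_insert] at huZ
          rcases huZ with rfl | huZ
          · exact ⟨v, mem_inter.mpr ⟨mem_inter.mpr
              ⟨mem_insert_self _ _, mem_NBg.mpr hRvu1⟩, hvS⟩⟩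
          rcases huZ with rfl | huZ
          · exact ⟨v, mem_inter.mpr ⟨mem_inter.mpr
              ⟨mem_insert_self _ _, mem_NBg.mpr hRvu2⟩, hvS⟩⟩
          · exact ⟨x, mem_inter.mpr ⟨mem_inter.mpr
              ⟨mem_insert_of_mem (mem_singleton_self _),
                mem_NBg.mpr (mem_NY.mp huZ).2⟩, hxS⟩⟩
      -- a third `Y`-neighbour of any element of `A \ B`
      have hu3ex : ∀ x : V, x ∈ A → x ∉ B → ∃ u3 ∈ NY R Y x, u3 ≠ u1 ∧ u3 ≠ u2 := by
        intro x hxA hxB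
        have hxX : x ∈ X := (mem_inter.mp (mem_of_mem_erase hxA)).2
        have hcard : 2 ≤ (NY R Y x).card := hXdeg x hxX
        obtain ⟨u3, hu3mem, hu3ne⟩ :=
          exists_mem_ne (s := NY R Y x) (by omega) u1
        refine ⟨u3, hu3mem, hu3ne, ?_⟩
        intro he
        subst he
        have hRxu2 : R x u3 := (mem_NY.mp hu3mem).2
        have hmm : x ∈ B := by
          rw [hB]
          exact mem_erase.mpr ⟨ne_of_mem_erase hxA,
            mem_inter.mpr ⟨mem_NBg.mpr hRxu2, hxX⟩⟩
        exact hxB hmm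
      -- measure bound for a `hQ2gen`-type instance
      have hQ2meas : ∀ (x : V) (F : Finset V), x ∈ A → x ∉ B → F ⊆ X →
          (X \ (insert v (insert x (B ∪ F)))).card + 3 ≤ X.card ∧
          (Y \ (insert u1 (insert u2 (NY R Y x)))).card + 3 ≤ Y.card := by
        intro x F hxA hxB hFX
        have hxX : x ∈ X := (mem_inter.mp (mem_of_mem_erase hxA)).2
        have hxv : x ≠ v := ne_of_mem_erase hxA
        have hxb0 : x ≠ b0 := fun h => hxB (h ▸ hb0B)
        have hvb0 : v ≠ b0 := fun h => hb0v h.symm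
        obtain ⟨u3, hu3NY, hu3ne1, hu3ne2⟩ := hu3ex x hxA hxB
        constructor
        · have hEX : ({v, x, b0} : Finset V).card = 3 := card3 hxv.symm hvb0 hxb0
          have hsubX : ({v, x, b0} : Finset V) ⊆ X := by
            intro y hy
            rw [mem_insert, mem_insert, mem_singleton] at hy
            rcases hy with rfl | rfl | rfl
            · exact hvX
            · exact hxX
            · exact hb0X
          have hsubD : ({v, x, b0} : Finset V) ⊆ insert v (insert x (B ∪ F)) := by
            intro y hy
            rw [mem_insert, mem_insert, mem_singleton] at hy
            rcases hy with rfl | rfl | rfl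
            · exact mem_insert_self _ _
            · exact mem_insert_of_mem (mem_insert_self _ _)
            · exact mem_insert_of_mem (mem_insert_of_mem (mem_union_left _ hb0B))
          have := sdiff_budget hsubX hsubD
          omega
        · have hu3Y : u3 ∈ Y := (mem_NY.mp hu3NY).1
          have hEY : ({u1, u2, u3} : Finset V).card = 3 :=
            card3 hne12 (Ne.symm hu3ne1) (Ne.symm hu3ne2)
          have hsubY : ({u1, u2, u3} : Finset V) ⊆ Y := by
            intro y hy
            rw [mem_insert, mem_insert, mem_singleton] at hy
            rcases hy with rfl | rfl | rfl
            · exact hu1Y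
            · exact hu2Y
            · exact hu3Y
          have hsubZ : ({u1, u2, u3} : Finset V)
              ⊆ insert u1 (insert u2 (NY R Y x)) := by
            intro y hy
            rw [mem_insert, mem_insert, mem_singleton] at hy
            rcases hy with rfl | rfl | rfl
            · exact mem_insert_self _ _
            · exact mem_insert_of_mem (mem_insert_self _ _)
            · exact mem_insert_of_mem (mem_insert_of_mem hu3NY)
          have := sdiff_budget hsubY hsubZ
          omega
      -- measures common to all sub-cases
      have hmv : (X \ {v}).card + 1 ≤ X.card := by
        have := sdiff_budget (X := X) (D := {v}) (E := {v})
          (singleton_subset_iff.mpr hvX) Subset.rfl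
        simpa using this
      have hmyempty : (Y \ (∅ : Finset V)).card = Y.card := by simp
      have hmP1x : (X \ (NBg R u1 ∩ X)).card + (NBg R u1 ∩ X).card ≤ X.card :=
        sdiff_budget inter_subset_right Subset.rfl
      have hmP1y : (Y \ ({u1, u2} : Finset V)).card + 2 ≤ Y.card := by
        have hsub12 : ({u1, u2} : Finset V) ⊆ Y := by
          intro y hy
          rw [mem_insert, mem_singleton] at hy
          rcases hy with rfl | rfl
          · exact hu1Y
          · exact hu2Y
        have := sdiff_budget hsub12 Subset.rfl
        have hc2 : ({u1, u2} : Finset V).card = 2 := card_pair hne12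
        omega
      have t0 : (((GoodSet R X Y).filter (fun S => v ∉ S)).card : ℝ)
          ≤ α ^ ((X \ {v}).card + (Y \ (∅ : Finset V)).card) :=
        le_trans (Nat.cast_le.mpr (hQ0 v)) (ih _ _ (by omega))
      have t1 : (((GoodSet R X Y).filter (fun S => v ∈ S ∧ NBg R u1 ∩ S = {v})).card : ℝ)
          ≤ α ^ ((X \ (NBg R u1 ∩ X)).card + (Y \ ({u1, u2} : Finset V)).card) :=
        le_trans (Nat.cast_le.mpr hbP1) (ih _ _ (by omega))
      by_cases hd14 : 4 ≤ (NBg R u1 ∩ X).card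
      · -- coarse sub-case : both degrees at least 4
        have hbQ2 : ((GoodSet R X Y).filter (fun S => v ∈ S ∧ NBg R u1 ∩ S ≠ {v})).card
            ≤ (GoodSet R (X \ (NBg R u2 ∩ X)) (Y \ {u1, u2})).card := by
          apply branch_card R _ {v}
          intro S hS hP
          have hP2 := (hwit2 S hS hP.1 hP.2).1
          rw [mem_GoodSet] at hS
          refine ⟨singleton_subset_iff.mpr hP.1,
            transfer R hS.1 hS.2 (singleton_subset_iff.mpr hP.1) ?_ ?_⟩
          · intro y hy
            rw [mem_inter] at hy
            have hym : y ∈ NBg R u2 ∩ S := mem_inter.mpr ⟨(mem_inter.mp hy.2).1, hy.1⟩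
            rw [hP2] at hym
            exact hym
          · intro u huZ
            rw [mem_insert, mem_singleton] at huZ
            rcases huZ with rfl | rfl
            · exact ⟨v, mem_inter.mpr ⟨mem_inter.mpr
                ⟨mem_singleton_self _, mem_NBg.mpr hRvu1⟩, hP.1⟩⟩
            · exact ⟨v, mem_inter.mpr ⟨mem_inter.mpr
                ⟨mem_singleton_self _, mem_NBg.mpr hRvu2⟩, hP.1⟩⟩
        have hmQ2x : (X \ (NBg R u2 ∩ X)).card + (NBg R u2 ∩ X).card ≤ X.card :=
          sdiff_budget inter_subset_right Subset.rfl
        have t2 : (((GoodSet R X Y).filter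
              (fun S => v ∈ S ∧ NBg R u1 ∩ S ≠ {v})).card : ℝ)
            ≤ α ^ ((X \ (NBg R u2 ∩ X)).card + (Y \ ({u1, u2} : Finset V)).card) :=
          le_trans (Nat.cast_le.mpr hbQ2) (ih _ _ (by omega))
        have hcov := card_cover3 (GoodSet R X Y) (fun S => v ∉ S)
          (fun S => v ∈ S ∧ NBg R u1 ∩ S = {v}) (fun S => v ∈ S ∧ NBg R u1 ∩ S ≠ {v})
          (fun S _ => by tauto)
        calc ((GoodSet R X Y).card : ℝ)
            ≤ (((GoodSet R X Y).filter (fun S => v ∉ S)).card : ℝ)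
              + (((GoodSet R X Y).filter (fun S => v ∈ S ∧ NBg R u1 ∩ S = {v})).card : ℝ)
              + (((GoodSet R X Y).filter (fun S => v ∈ S ∧ NBg R u1 ∩ S ≠ {v})).card : ℝ) := by
              exact_mod_cast hcov
          _ ≤ α ^ ((X \ {v}).card + (Y \ (∅ : Finset V)).card)
              + α ^ ((X \ (NBg R u1 ∩ X)).card + (Y \ ({u1, u2} : Finset V)).card)
              + α ^ ((X \ (NBg R u2 ∩ X)).card + (Y \ ({u1, u2} : Finset V)).card) :=
              add_le_add (add_le_add t0 t1) t2
          _ ≤ α ^ (X.card + Y.card) := AR3 hroot hlo (by omega) (by omega) (by omega)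
      · -- refined sub-case : `u1` has degree 2 or 3
        push_neg at hd14
        have hABsub : A \ B ⊆ A := sdiff_subset
        have hABcard : (A \ B).card ≤ 2 := by
          have := card_le_card hABsub
          omega
        have habove : (A \ B).card = 0 ∨ (A \ B).card = 1 ∨ (A \ B).card = 2 := by omega
        rcases habove with hA0 | hA1 | hA2
        · -- no sub-branch at all
          have hcov := card_cover2 (GoodSet R X Y) (fun S => v ∉ S)
            (fun S => v ∈ S ∧ NBg R u1 ∩ S = {v})
            (fun S hS => by
              by_cases hv : v ∈ S
              · right
                refine ⟨hv, ?_⟩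
                by_contra hne1
                obtain ⟨_, x, hxS, hxA, hxB⟩ := hwit2 S hS hv hne1
                have hxAB : x ∈ A \ B := mem_sdiff.mpr ⟨hxA, hxB⟩
                rw [card_eq_zero.mp hA0] at hxAB
                exact absurd hxAB (notMem_empty x)
              · exact Or.inl hv)
          calc ((GoodSet R X Y).card : ℝ)
              ≤ (((GoodSet R X Y).filter (fun S => v ∉ S)).card : ℝ)
                + (((GoodSet R X Y).filter
                    (fun S => v ∈ S ∧ NBg R u1 ∩ S = {v})).card : ℝ) := by
                exact_mod_cast hcov
            _ ≤ α ^ ((X \ {v}).card + (Y \ (∅ : Finset V)).card)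
                + α ^ ((X \ (NBg R u1 ∩ X)).card + (Y \ ({u1, u2} : Finset V)).card) :=
                add_le_add t0 t1
            _ ≤ α ^ (X.card + Y.card) := AR2 hroot hlo (by omega) (by omega)
        · -- exactly one candidate `x`
          obtain ⟨x, hABx⟩ := card_eq_one.mp hA1
          have hxAB : x ∈ A \ B := by rw [hABx]; exact mem_singleton_self x
          have hxA : x ∈ A := hABsub hxAB
          have hxB : x ∉ B := (mem_sdiff.mp hxAB).2
          have hbQ2 := hQ2gen x ∅ hxA hxB (notMem_empty _) (notMem_empty _)
            (fun S => v ∈ S ∧ NBg R u1 ∩ S ≠ {v}) inferInstance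
            (fun S hS hP => by
              obtain ⟨hP2, x', hx'S, hx'A, hx'B⟩ := hwit2 S hS hP.1 hP.2
              have hx'AB : x' ∈ A \ B := mem_sdiff.mpr ⟨hx'A, hx'B⟩
              rw [hABx, mem_singleton] at hx'AB
              subst hx'AB
              exact ⟨hP.1, hP2, hx'S, fun y hy => absurd hy (notMem_empty y)⟩)
          obtain ⟨hmx, hmy⟩ := hQ2meas x ∅ hxA hxB (empty_subset _)
          have t2 : (((GoodSet R X Y).filter
                (fun S => v ∈ S ∧ NBg R u1 ∩ S ≠ {v})).card : ℝ)
              ≤ α ^ ((X \ (insert v (insert x (B ∪ ∅)))).card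
                  + (Y \ (insert u1 (insert u2 (NY R Y x)))).card) :=
            le_trans (Nat.cast_le.mpr hbQ2) (ih _ _ (by omega))
          have hcov := card_cover3 (GoodSet R X Y) (fun S => v ∉ S)
            (fun S => v ∈ S ∧ NBg R u1 ∩ S = {v}) (fun S => v ∈ S ∧ NBg R u1 ∩ S ≠ {v})
            (fun S _ => by tauto)
          calc ((GoodSet R X Y).card : ℝ)
              ≤ (((GoodSet R X Y).filter (fun S => v ∉ S)).card : ℝ)
                + (((GoodSet R X Y).filter
                    (fun S => v ∈ S ∧ NBg R u1 ∩ S = {v})).card : ℝ)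
                + (((GoodSet R X Y).filter
                    (fun S => v ∈ S ∧ NBg R u1 ∩ S ≠ {v})).card : ℝ) := by
                exact_mod_cast hcov
            _ ≤ α ^ ((X \ {v}).card + (Y \ (∅ : Finset V)).card)
                + α ^ ((X \ (NBg R u1 ∩ X)).card + (Y \ ({u1, u2} : Finset V)).card)
                + α ^ ((X \ (insert v (insert x (B ∪ ∅)))).card
                    + (Y \ (insert u1 (insert u2 (NY R Y x)))).card) :=
                add_le_add (add_le_add t0 t1) t2
            _ ≤ α ^ (X.card + Y.card) := AR3 hroot hlo (by omega) (by omega) (by omega)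
        · -- two candidates `x1, x2`
          obtain ⟨x1, x2, hx12, hABeq⟩ := card_eq_two.mp hA2
          have hx1AB : x1 ∈ A \ B := by rw [hABeq]; exact mem_insert_self _ _
          have hx2AB : x2 ∈ A \ B := by
            rw [hABeq]; exact mem_insert_of_mem (mem_singleton_self _)
          have hx1A : x1 ∈ A := hABsub hx1AB
          have hx1B : x1 ∉ B := (mem_sdiff.mp hx1AB).2
          have hx2A : x2 ∈ A := hABsub hx2AB
          have hx2B : x2 ∉ B := (mem_sdiff.mp hx2AB).2
          have hx1X : x1 ∈ X := (mem_inter.mp (mem_of_mem_erase hx1A)).2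
          have hx1v : x1 ≠ v := ne_of_mem_erase hx1A
          have hx2v : x2 ≠ v := ne_of_mem_erase hx2A
          have hd13 : 3 ≤ (NBg R u1 ∩ X).card := by
            have h2A : 2 ≤ A.card := hA2 ▸ card_le_card hABsub
            omega
          -- branch Q2a : x1 ∈ S
          have hbQ2a := hQ2gen x1 ∅ hx1A hx1B (notMem_empty _) (notMem_empty _)
            (fun S => v ∈ S ∧ NBg R u1 ∩ S ≠ {v} ∧ x1 ∈ S)
            inferInstance
            (fun S hS hP => by
              obtain ⟨hP2, _, _, _, _⟩ := hwit2 S hS hP.1 hP.2.1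
              exact ⟨hP.1, hP2, hP.2.2, fun y hy => absurd hy (notMem_empty y)⟩)
          obtain ⟨hmx2a, hmy2a⟩ := hQ2meas x1 ∅ hx1A hx1B (empty_subset _)
          -- branch Q2b : x1 ∉ S (then x2 ∈ S)
          have hbQ2b := hQ2gen x2 {x1} hx2A hx2B
            (by rw [mem_singleton]; exact fun h => hx1v h.symm)
            (by rw [mem_singleton]; exact fun h => hx12 h.symm)
            (fun S => v ∈ S ∧ NBg R u1 ∩ S ≠ {v} ∧ x1 ∉ S)
            inferInstance
            (fun S hS hP => by
              obtain ⟨hP2, x', hx'S, hx'A, hx'B⟩ := hwit2 S hS hP.1 hP.2.1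
              have hx'AB : x' ∈ A \ B := mem_sdiff.mpr ⟨hx'A, hx'B⟩
              rw [hABeq, mem_insert, mem_singleton] at hx'AB
              have hx2S : x2 ∈ S := by
                rcases hx'AB with rfl | rfl
                · exact absurd hx'S hP.2.2
                · exact hx'S
              refine ⟨hP.1, hP2, hx2S, fun y hy => ?_⟩
              rw [mem_singleton] at hy
              subst hy
              exact hP.2.2)
          obtain ⟨hmx2b, hmy2b⟩ := hQ2meas x2 {x1} hx2A hx2B
            (singleton_subset_iff.mpr hx1X)
          -- improved X-measure for Q2b : 4 vertices disappear
          have hmx2b' : (X \ (insert v (insert x2 (B ∪ {x1})))).card + 4 ≤ X.card := by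
            have hx1b0 : x1 ≠ b0 := fun h => hx1B (h ▸ hb0B)
            have hx2b0 : x2 ≠ b0 := fun h => hx2B (h ▸ hb0B)
            have hvb0 : v ≠ b0 := fun h => hb0v h.symm
            have hEX : ({x1, v, x2, b0} : Finset V).card = 4 :=
              card4 hx1v hx12 hx1b0 hx2v.symm hvb0 hx2b0
            have hsubX : ({x1, v, x2, b0} : Finset V) ⊆ X := by
              intro y hy
              rw [mem_insert, mem_insert, mem_insert, mem_singleton] at hy
              rcases hy with rfl | rfl | rfl | rfl
              · exact hx1X
              · exact hvX
              · exact (mem_inter.mp (mem_of_mem_erase hx2A)).2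
              · exact hb0X
            have hsubD : ({x1, v, x2, b0} : Finset V)
                ⊆ insert v (insert x2 (B ∪ {x1})) := by
              intro y hy
              rw [mem_insert, mem_insert, mem_insert, mem_singleton] at hy
              rcases hy with rfl | rfl | rfl | rfl
              · exact mem_insert_of_mem (mem_insert_of_mem
                  (mem_union_right _ (mem_singleton_self _)))
              · exact mem_insert_self _ _
              · exact mem_insert_of_mem (mem_insert_self _ _)
              · exact mem_insert_of_mem (mem_insert_of_mem (mem_union_left _ hb0B))
            have := sdiff_budget hsubX hsubD
            omega
          have t2 : (((GoodSet R X Y).filter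
                (fun S => v ∈ S ∧ NBg R u1 ∩ S ≠ {v} ∧ x1 ∈ S)).card : ℝ)
              ≤ α ^ ((X \ (insert v (insert x1 (B ∪ ∅)))).card
                  + (Y \ (insert u1 (insert u2 (NY R Y x1)))).card) :=
            le_trans (Nat.cast_le.mpr hbQ2a) (ih _ _ (by omega))
          have t3 : (((GoodSet R X Y).filter
                (fun S => v ∈ S ∧ NBg R u1 ∩ S ≠ {v} ∧ x1 ∉ S)).card : ℝ)
              ≤ α ^ ((X \ (insert v (insert x2 (B ∪ {x1})))).card
                  + (Y \ (insert u1 (insert u2 (NY R Y x2)))).card) :=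
            le_trans (Nat.cast_le.mpr hbQ2b) (ih _ _ (by omega))
          have hcov := card_cover4 (GoodSet R X Y) (fun S => v ∉ S)
            (fun S => v ∈ S ∧ NBg R u1 ∩ S = {v})
            (fun S => v ∈ S ∧ NBg R u1 ∩ S ≠ {v} ∧ x1 ∈ S)
            (fun S => v ∈ S ∧ NBg R u1 ∩ S ≠ {v} ∧ x1 ∉ S)
            (fun S _ => by tauto)
          calc ((GoodSet R X Y).card : ℝ)
              ≤ (((GoodSet R X Y).filter (fun S => v ∉ S)).card : ℝ)
                + (((GoodSet R X Y).filter
                    (fun S => v ∈ S ∧ NBg R u1 ∩ S = {v})).card : ℝ)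
                + (((GoodSet R X Y).filter
                    (fun S => v ∈ S ∧ NBg R u1 ∩ S ≠ {v} ∧ x1 ∈ S)).card : ℝ)
                + (((GoodSet R X Y).filter
                    (fun S => v ∈ S ∧ NBg R u1 ∩ S ≠ {v} ∧ x1 ∉ S)).card : ℝ) := by
                exact_mod_cast hcov
            _ ≤ α ^ ((X \ {v}).card + (Y \ (∅ : Finset V)).card)
                + α ^ ((X \ (NBg R u1 ∩ X)).card + (Y \ ({u1, u2} : Finset V)).card)
                + α ^ ((X \ (insert v (insert x1 (B ∪ ∅)))).card
                    + (Y \ (insert u1 (insert u2 (NY R Y x1)))).card)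
                + α ^ ((X \ (insert v (insert x2 (B ∪ {x1})))).card
                    + (Y \ (insert u1 (insert u2 (NY R Y x2)))).card) :=
                add_le_add (add_le_add (add_le_add t0 t1) t2) t3
            _ ≤ α ^ (X.card + Y.card) :=
                AR4 hroot hlo (by omega) (by omega) (by omega) (by omega)
    · -- C5 : every vertex of X has at least 3 Y-neighbours
      have hXne : X.Nonempty := nonempty_iff_ne_empty.mpr hXe
      obtain ⟨v, hvX⟩ := hXne
      push_neg at hR1 hC3 hC4
      have hdeg3 : 3 ≤ (NY R Y v).card := by
        have h0 : (NY R Y v).card ≠ 0 := fun h => (hR1 v hvX).ne_empty (card_eq_zero.mp h)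
        have h1 : (NY R Y v).card ≠ 1 := by
          intro h
          obtain ⟨w, hw⟩ := card_eq_one.mp h
          exact hC3 v hvX w hw
        have h2 : (NY R Y v).card ≠ 2 := hC4 v hvX
        omega
      have hb1 : ((GoodSet R X Y).filter (fun S => v ∈ S)).card
          ≤ (GoodSet R (X \ {v}) (Y \ (NY R Y v))).card := by
        apply branch_card R _ {v}
        intro S hS hP
        rw [mem_GoodSet] at hS
        refine ⟨singleton_subset_iff.mpr hP,
          transfer R hS.1 hS.2 (singleton_subset_iff.mpr hP) ?_ ?_⟩
        · intro y hy
          rw [mem_inter] at hy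
          exact hy.2
        · intro u huZ
          exact ⟨v, mem_inter.mpr ⟨mem_inter.mpr
            ⟨mem_singleton_self _, mem_NBg.mpr (mem_NY.mp huZ).2⟩, hP⟩⟩
      have hmv : (X \ {v}).card + 1 ≤ X.card := by
        have := sdiff_budget (X := X) (D := {v}) (E := {v})
          (singleton_subset_iff.mpr hvX) Subset.rfl
        simpa using this
      have hmyempty : (Y \ (∅ : Finset V)).card = Y.card := by simp
      have hmy : (Y \ NY R Y v).card + (NY R Y v).card ≤ Y.card :=
        sdiff_budget (filter_subset _ _) Subset.rfl
      have hcov := card_cover2 (GoodSet R X Y) (fun S => v ∉ S) (fun S => v ∈ S)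
        (fun S _ => (em (v ∈ S)).symm)
      have t0 : (((GoodSet R X Y).filter (fun S => v ∉ S)).card : ℝ)
          ≤ α ^ ((X \ {v}).card + (Y \ (∅ : Finset V)).card) :=
        le_trans (Nat.cast_le.mpr (hQ0 v)) (ih _ _ (by omega))
      have t1 : (((GoodSet R X Y).filter (fun S => v ∈ S)).card : ℝ)
          ≤ α ^ ((X \ {v}).card + (Y \ NY R Y v).card) :=
        le_trans (Nat.cast_le.mpr hb1) (ih _ _ (by omega))
      calc ((GoodSet R X Y).card : ℝ)
          ≤ (((GoodSet R X Y).filter (fun S => v ∉ S)).card : ℝ)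
            + (((GoodSet R X Y).filter (fun S => v ∈ S)).card : ℝ) := by exact_mod_cast hcov
        _ ≤ α ^ ((X \ {v}).card + (Y \ (∅ : Finset V)).card)
            + α ^ ((X \ {v}).card + (Y \ NY R Y v).card) := add_le_add t0 t1
        _ ≤ α ^ (X.card + Y.card) := AR2 hroot hlo (by omega) (by omega)

end CoreBound

/-
  =================== Part 2: from minimal RDFs to good sets ===================
-/

section Graph

variable {V : Type} [Fintype V] (G : SimpleGraph V)

private lemma fin3_cases (a : Fin 3) : a = 0 ∨ a = 1 ∨ a = 2 := by revert a; decide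

lemma minimal_no12 {f : V → Fin 3} (hf : IsMinimalRDF G f) {v u : V} (h1 : f v = 1)
    (hadj : G.Adj v u) : f u ≠ 2 := by
  classical
  intro h2
  have hne : u ≠ v := fun h => by rw [h, h1] at h2; exact absurd h2 (by decide)
  have hrdf : IsRDF G (Function.update f v 0) := by
    intro w hw
    by_cases hwv : w = v
    · subst hwv
      exact ⟨u, hadj, by rw [Function.update_of_ne hne]; exact h2⟩
    · rw [Function.update_of_ne hwv] at hw
      obtain ⟨u', hu', h2'⟩ := hf.1 w hw
      have hne' : u' ≠ v := fun h => by rw [h, h1] at h2'; exact absurd h2' (by decide)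
      exact ⟨u', hu', by rw [Function.update_of_ne hne']; exact h2'⟩
  have hle : Function.update f v 0 ≤ f := by
    intro w
    by_cases hwv : w = v
    · subst hwv; rw [Function.update_self]; exact Fin.zero_le _
    · rw [Function.update_of_ne hwv]
  have heq := hf.2 _ hrdf hle
  have hv := congrFun heq v
  rw [Function.update_self, h1] at hv
  exact absurd hv (by decide)

lemma minimal_private {f : V → Fin 3} (hf : IsMinimalRDF G f) {v : V} (h2 : f v = 2) :
    ∃ w, G.Adj v w ∧ f w = 0 ∧ ∀ u, G.Adj w u → f u = 2 → u = v := by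
  classical
  by_contra hno
  push_neg at hno
  have hrdf : IsRDF G (Function.update f v 1) := by
    intro w hw
    have hwv : w ≠ v := fun h => by
      rw [h, Function.update_self] at hw; exact absurd hw (by decide)
    rw [Function.update_of_ne hwv] at hw
    obtain ⟨u, hu, hu2⟩ := hf.1 w hw
    by_cases huv : u = v
    · subst huv
      obtain ⟨u', hwu', hu'2, hu'v⟩ := hno w hu.symm hw
      exact ⟨u', hwu', by rw [Function.update_of_ne hu'v]; exact hu'2⟩
    · exact ⟨u, hu, by rw [Function.update_of_ne huv]; exact hu2⟩
  have hle : Function.update f v 1 ≤ f := by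
    intro w
    by_cases hwv : w = v
    · subst hwv
      rw [Function.update_self, h2]
      exact (by decide : (1 : Fin 3) ≤ 2)
    · rw [Function.update_of_ne hwv]
  have heq := hf.2 _ hrdf hle
  have hv := congrFun heq v
  rw [Function.update_self, h2] at hv
  exact absurd hv (by decide)

/-- The set of vertices with value `2`. -/
noncomputable def phi (f : V → Fin 3) : Finset V := Finset.univ.filter (fun w => f w = 2)

lemma mem_phi {f : V → Fin 3} {v : V} : v ∈ phi f ↔ f v = 2 := by simp [phi]

/-- Reconstruction of a minimal rdf from its set of 2's. -/
noncomputable def recon (T : Finset V) : V → Fin 3 := fun w =>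
  if w ∈ T then 2 else if ∃ u ∈ T, G.Adj w u then 0 else 1

lemma minimal_eq_recon {f : V → Fin 3} (hf : IsMinimalRDF G f) :
    f = recon G (phi f) := by
  funext w
  rcases fin3_cases (f w) with h | h | h
  · have hw2 : w ∉ phi f := by rw [mem_phi, h]; decide
    obtain ⟨u, hu, hu2⟩ := hf.1 w h
    have : ∃ u ∈ phi f, G.Adj w u := ⟨u, mem_phi.mpr hu2, hu⟩
    rw [recon, if_neg hw2, if_pos this, h]
  · have hw2 : w ∉ phi f := by rw [mem_phi, h]; decide
    have hnex : ¬∃ u ∈ phi f, G.Adj w u := by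
      rintro ⟨u, hu, huadj⟩
      exact minimal_no12 G hf h huadj (mem_phi.mp hu)
    rw [recon, if_neg hw2, if_neg hnex, h]
  · rw [recon, if_pos (mem_phi.mpr h), h]

end Graph

/-
  =================== The main theorem ===================
-/

/-- Let `α` be the (unique) real root of `x³ = x² + 1` (with `1.46 < α < 1.47`). There is a
polynomial `p` such that every split graph of order `n` has at most `p(n) · αⁿ` minimal
Roman dominating functions. -/
theorem split_numMinRDF_upper (α : ℝ) (hroot : α ^ 3 = α ^ 2 + 1)
    (hlo : 1.46 < α) (hhi : α < 1.47) :
    ∃ p : Polynomial ℝ, ∀ (V : Type) [Fintype V] (G : SimpleGraph V),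
      (∃ C I : Set V, C ∪ I = Set.univ ∧ Disjoint C I ∧ G.IsClique C ∧
        (∀ u ∈ I, ∀ w ∈ I, ¬ G.Adj u w)) →
      (numMinRDF G : ℝ) ≤ p.eval (Fintype.card V : ℝ) * α ^ (Fintype.card V) := by
  classical
  refine ⟨Polynomial.X + Polynomial.C 3, ?_⟩
  intro V _ G hsplit
  obtain ⟨C, I, hCI, hdisj, hclique, hind⟩ := hsplit
  set n := Fintype.card V with hn
  set Cf := (Set.toFinite C).toFinset with hCf
  set If := (Set.toFinite I).toFinset with hIf
  have hmemC : ∀ x : V, x ∈ Cf ↔ x ∈ C := fun x => Set.Finite.mem_toFinset _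
  have hmemI : ∀ x : V, x ∈ If ↔ x ∈ I := fun x => Set.Finite.mem_toFinset _
  have hunion : ∀ x : V, x ∈ C ∨ x ∈ I := by
    intro x
    have : x ∈ C ∪ I := by rw [hCI]; trivial
    exact this
  have hdisj' : ∀ x : V, x ∈ C → x ∈ I → False :=
    fun x hc hi => Set.disjoint_left.mp hdisj hc hi
  have hcardsum : Cf.card + If.card = n := by
    have hd : Disjoint Cf If := by
      rw [Finset.disjoint_left]
      intro a ha hb
      exact hdisj' a ((hmemC a).mp ha) ((hmemI a).mp hb)
    have hu : Cf ∪ If = Finset.univ := by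
      ext x
      simp only [Finset.mem_union, Finset.mem_univ, iff_true, hmemC, hmemI]
      exact hunion x
    rw [← card_union_of_disjoint hd, hu, card_univ]
  -- the finset of minimal rdfs
  set M := Finset.univ.filter (fun f : V → Fin 3 => IsMinimalRDF G f) with hM
  have hnum : numMinRDF G = M.card := by
    have hset : {f : V → Fin 3 | IsMinimalRDF G f} = ↑M := by
      ext f
      simp [hM]
    rw [numMinRDF, hset, Set.ncard_coe_finset]
  have hinj : Set.InjOn phi (M : Set (V → Fin 3)) := by
    intro f hf g hg hfg
    have hf' : IsMinimalRDF G f := by simpa [hM] using hf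
    have hg' : IsMinimalRDF G g := by simpa [hM] using hg
    rw [minimal_eq_recon G hf', minimal_eq_recon G hg', hfg]
  have hcard1 : M.card = (M.image phi).card := (Finset.card_image_of_injOn hinj).symm
  -- bucket containment
  have hsub : M.image phi ⊆ insert ∅ (Cf.image (fun v => ({v} : Finset V)))
      ∪ GoodSet G.Adj Cf If ∪ GoodSet G.Adj If Cf := by
    intro T hT
    obtain ⟨f, hfM, rfl⟩ := mem_image.mp hT
    have hf : IsMinimalRDF G f := by simpa [hM] using hfM
    by_cases hTC : phi f ⊆ Cf
    · by_cases hT1 : (phi f).card ≤ 1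
      · apply mem_union_left
        apply mem_union_left
        rcases Nat.le_one_iff_eq_zero_or_eq_one.mp hT1 with h0 | h1
        · rw [card_eq_zero.mp h0]
          exact mem_insert_self _ _
        · obtain ⟨v, hv⟩ := card_eq_one.mp h1
          rw [hv]
          exact mem_insert_of_mem
            (mem_image.mpr ⟨v, hTC (hv ▸ mem_singleton_self v), rfl⟩)
      · apply mem_union_left
        apply mem_union_right
        rw [mem_GoodSet]
        refine ⟨hTC, ?_⟩
        intro v hvT
        have hv2 : f v = 2 := mem_phi.mp hvT
        obtain ⟨w, hadj, hw0, hpriv⟩ := minimal_private G hf hv2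
        have hwI : w ∈ I := by
          rcases hunion w with hwC | hwI
          · exfalso
            obtain ⟨v', hv'T, hv'ne⟩ :=
              exists_mem_ne (s := phi f) (by omega) v
            have hv'C : v' ∈ C := (hmemC v').mp (hTC hv'T)
            have hwv' : w ≠ v' := by
              intro h
              rw [h] at hw0
              rw [mem_phi] at hv'T
              rw [hv'T] at hw0
              exact absurd hw0 (by decide)
            exact hv'ne (hpriv v' (hclique hwC hv'C hwv') (mem_phi.mp hv'T))
          · exact hwI
        refine ⟨w, (hmemI w).mpr hwI, ?_⟩
        ext x
        simp only [mem_inter, mem_singleton]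
        constructor
        · rintro ⟨hx1, hx2⟩
          exact hpriv x (mem_NBg.mp hx1).symm (mem_phi.mp hx2)
        · rintro rfl
          exact ⟨mem_NBg.mpr hadj, hvT⟩
    · apply mem_union_right
      have hmixed : ∀ x ∈ phi f, x ∈ I := by
        intro x hxT
        rcases hunion x with hxC | hxI
        · exfalso
          obtain ⟨u0, hu0T, hu0nC⟩ := not_subset.mp hTC
          have hu0I : u0 ∈ I := by
            rcases hunion u0 with h | h
            · exact absurd ((hmemC u0).mpr h) hu0nC
            · exact h
          obtain ⟨w, hadj, hw0, hpriv⟩ := minimal_private G hf (mem_phi.mp hu0T)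
          have hwC : w ∈ C := by
            rcases hunion w with h | h
            · exact h
            · exact absurd hadj (hind u0 hu0I w h)
          have hwx : w ≠ x := by
            intro h
            rw [h] at hw0
            rw [mem_phi] at hxT
            rw [hxT] at hw0
            exact absurd hw0 (by decide)
          have hxu0 : x = u0 := hpriv x (hclique hwC hxC hwx) (mem_phi.mp hxT)
          exact hdisj' u0 (hxu0 ▸ hxC) hu0I
        · exact hxI
      rw [mem_GoodSet]
      refine ⟨fun x hx => (hmemI x).mpr (hmixed x hx), ?_⟩
      intro u huT
      obtain ⟨w, hadj, hw0, hpriv⟩ := minimal_private G hf (mem_phi.mp huT)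
      have huI : u ∈ I := hmixed u huT
      have hwC : w ∈ C := by
        rcases hunion w with h | h
        · exact h
        · exact absurd hadj (hind u huI w h)
      refine ⟨w, (hmemC w).mpr hwC, ?_⟩
      ext x
      simp only [mem_inter, mem_singleton]
      constructor
      · rintro ⟨hx1, hx2⟩
        exact hpriv x (mem_NBg.mp hx1).symm (mem_phi.mp hx2)
      · rintro rfl
        exact ⟨mem_NBg.mpr hadj, huT⟩
  -- counting
  have hb1card : (insert ∅ (Cf.image (fun v => ({v} : Finset V)))).card ≤ 1 + Cf.card := by
    refine le_trans (card_insert_le _ _) ?_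
    have := card_image_le (s := Cf) (f := fun v => ({v} : Finset V))
    omega
  have hcore1 : ((GoodSet G.Adj Cf If).card : ℝ) ≤ α ^ n := by
    have h := core_bound G.Adj hroot hlo (Cf.card + If.card) Cf If le_rfl
    rwa [hcardsum] at h
  have hcore2 : ((GoodSet G.Adj If Cf).card : ℝ) ≤ α ^ n := by
    have h := core_bound G.Adj hroot hlo (If.card + Cf.card) If Cf le_rfl
    have he : If.card + Cf.card = n := by omega
    rwa [he] at h
  have hcardle : (M.image phi).card
      ≤ (insert ∅ (Cf.image (fun v => ({v} : Finset V)))).card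
        + (GoodSet G.Adj Cf If).card + (GoodSet G.Adj If Cf).card := by
    refine le_trans (card_le_card hsub) ?_
    refine le_trans (card_union_le _ _) ?_
    exact Nat.add_le_add_right (card_union_le _ _) _
  have hCfn : Cf.card ≤ n := by omega
  have hα1 : (1:ℝ) ≤ α := by norm_num at hlo; linarith
  have hαn : (1:ℝ) ≤ α ^ n := one_le_pow₀ hα1
  have heval : (Polynomial.X + Polynomial.C 3 : Polynomial ℝ).eval ((n : ℝ)) = (n : ℝ) + 3 := by
    simp
  rw [heval, hnum]
  have hfinal : (M.card : ℝ) ≤ (1 + (n:ℝ)) + α ^ n + α ^ n := by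
    rw [hcard1]
    calc ((M.image phi).card : ℝ)
        ≤ ((insert ∅ (Cf.image (fun v => ({v} : Finset V)))).card : ℝ)
          + ((GoodSet G.Adj Cf If).card : ℝ) + ((GoodSet G.Adj If Cf).card : ℝ) := by
          exact_mod_cast hcardle
      _ ≤ (1 + (n:ℝ)) + α ^ n + α ^ n := by
          have hc : ((insert ∅ (Cf.image (fun v => ({v} : Finset V)))).card : ℝ)
              ≤ (1 + (n:ℝ)) := by exact_mod_cast le_trans hb1card (by omega)
          linarith
  calc (M.card : ℝ) ≤ (1 + (n:ℝ)) + α ^ n + α ^ n := hfinal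
    _ ≤ ((n : ℝ) + 3) * α ^ n := by
        nlinarith [hαn, (Nat.cast_nonneg n : (0:ℝ) ≤ (n:ℝ))]
end
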